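/- arXiv:1809.08720 — 9 statements merged into one kernel-verified Lean document; each statement's English description precedes it below -/
import Mathlib

section
/- Let ω ∈ ℝⁿ with 1_nᵀω = 0 and set η = BᵀL†ω. For every x ∈ ℝⁿ, the node balance equation ω = B𝒜 sin(Bᵀx) holds if and only if the flow balance equation η = P_cut sin(Bᵀx) holds. (In particular, B𝒜 P_cut = B𝒜.) -/
open Matrix Filter Topology

lemma aux_cancel {n m : ℕ} (B : Matrix (Fin n) (Fin m) ℝ)
    (a : Fin m → ℝ) (ha : ∀ e, 0 < a e) (C : Matrix (Fin n) (Fin n) ℝ)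
    (h : C * (B * Matrix.diagonal a * B.transpose) * Cᵀ = 0) : C * B = 0 := by
  set D := C * B with hDdef
  have hD : D * Matrix.diagonal a * Dᵀ = 0 := by
    rw [hDdef, ← h]
    simp only [Matrix.transpose_mul, Matrix.mul_assoc]
  ext i e
  have hsum : ∑ f, D i f * a f * D i f = 0 := by
    have hentry : (D * Matrix.diagonal a * Dᵀ) i i = 0 := by rw [hD]; rfl
    rw [← hentry, Matrix.mul_apply]
    congr 1; ext f
    rw [Matrix.mul_diagonal, Matrix.transpose_apply]
  have hzero : ∀ f ∈ Finset.univ, D i f * a f * D i f = 0 := by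
    rw [← Finset.sum_eq_zero_iff_of_nonneg]
    · exact hsum
    · intro f _
      have h1 : D i f * a f * D i f = a f * (D i f)^2 := by ring
      rw [h1]
      exact mul_nonneg (ha f).le (sq_nonneg _)
  have h2 := hzero e (Finset.mem_univ e)
  have h3 : a e * (D i e)^2 = 0 := by linear_combination h2
  have h4 : (D i e)^2 = 0 := (mul_eq_zero.mp h3).resolve_left (ha e).ne'
  have h5 : D i e = 0 := by
    exact pow_eq_zero_iff (by norm_num : 2 ≠ 0) |>.mp h4
  simpa using h5

/-- Let `ω ⊥ 1ₙ` and `η = BᵀL†ω`. For every `x ∈ ℝⁿ`, the node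
balance equation `ω = B𝒜 sin(Bᵀx)` holds iff the flow balance equation
`η = P_cut sin(Bᵀx)` holds. In particular `B𝒜 P_cut = B𝒜`. -/
theorem node_balance_iff_flow_balance
    {n m : ℕ} (hn : 2 ≤ n)
    (B : Matrix (Fin n) (Fin m) ℝ)
    -- incidence matrix: each column has exactly one `+1`, one `-1`, zeros elsewhere
    (hB : ∀ e : Fin m, ∃ i j : Fin n, i ≠ j ∧ B i e = 1 ∧ B j e = -1 ∧
      ∀ k : Fin n, k ≠ i → k ≠ j → B k e = 0)
    -- connectivity: the kernel of `Bᵀ` is spanned by the all-ones vector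
    (hconn : ∀ x : Fin n → ℝ, B.transpose.mulVec x = 0 ↔ ∃ c : ℝ, x = fun _ => c)
    -- positive edge weights
    (a : Fin m → ℝ) (ha : ∀ e, 0 < a e)
    (M : Matrix (Fin n) (Fin n) ℝ)
    -- Moore–Penrose conditions for `M = L†`, `L = B𝒜Bᵀ`
    (hM1 : (B * Matrix.diagonal a * B.transpose) * M * (B * Matrix.diagonal a * B.transpose)
        = B * Matrix.diagonal a * B.transpose)
    (hM2 : M * (B * Matrix.diagonal a * B.transpose) * M = M)
    (hM3 : (M * (B * Matrix.diagonal a * B.transpose))ᵀ = M * (B * Matrix.diagonal a * B.transpose))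
    (hM4 : ((B * Matrix.diagonal a * B.transpose) * M)ᵀ = (B * Matrix.diagonal a * B.transpose) * M)
    (ω : Fin n → ℝ) (hω : ∑ i, ω i = 0)
    (x : Fin n → ℝ) :
    let η : Fin m → ℝ := B.transpose.mulVec (M.mulVec ω)
    let Pcut : Matrix (Fin m) (Fin m) ℝ := B.transpose * M * (B * Matrix.diagonal a)
    ((ω = (B * Matrix.diagonal a).mulVec (fun e => Real.sin (B.transpose.mulVec x e))) ↔
      η = Pcut.mulVec (fun e => Real.sin (B.transpose.mulVec x e))) ∧
    B * Matrix.diagonal a * Pcut = B * Matrix.diagonal a := by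
  intro η Pcut
  set s : Fin m → ℝ := fun e => Real.sin (B.transpose.mulVec x e) with hs
  set L : Matrix (Fin n) (Fin n) ℝ := B * Matrix.diagonal a * B.transpose with hL
  -- key1 : L * M * B = B
  have key1 : L * M * B = B := by
    have hQL : (1 - L * M) * L = 0 := by
      rw [Matrix.sub_mul, Matrix.one_mul, Matrix.mul_assoc, ← Matrix.mul_assoc]
      rw [hM1, sub_self]
    have h0 : (1 - L * M) * (B * Matrix.diagonal a * B.transpose) * (1 - L * M)ᵀ = 0 := by
      rw [← hL, hQL, Matrix.zero_mul]
    have := aux_cancel B a ha (1 - L * M) h0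
    rw [Matrix.sub_mul, Matrix.one_mul, sub_eq_zero] at this
    exact this.symm
  -- key2 : Bᵀ * (L * M) = Bᵀ
  have key2 : B.transpose * (L * M) = B.transpose := by
    calc B.transpose * (L * M) = ((L * M)ᵀ * B)ᵀ := by
          rw [Matrix.transpose_mul, Matrix.transpose_transpose]
      _ = (L * M * B)ᵀ := by rw [hM4]
      _ = B.transpose := by rw [key1]
  -- keyP : B𝒜 Pcut = B𝒜
  have keyP : B * Matrix.diagonal a * Pcut = B * Matrix.diagonal a := by
    show B * Matrix.diagonal a * (B.transpose * M * (B * Matrix.diagonal a)) = _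
    calc B * Matrix.diagonal a * (B.transpose * M * (B * Matrix.diagonal a))
        = (L * M * B) * Matrix.diagonal a := by
          rw [hL]; simp only [Matrix.mul_assoc]
      _ = B * Matrix.diagonal a := by rw [key1]
  -- keyω : (L * M).mulVec ω = ω
  have keyω : (L * M).mulVec ω = ω := by
    set Q : Matrix (Fin n) (Fin n) ℝ := 1 - L * M with hQdef
    have hBQ : B.transpose * Q = 0 := by
      rw [hQdef, Matrix.mul_sub, Matrix.mul_one, key2, sub_self]
    have hQsym : Qᵀ = Q := by
      rw [hQdef, Matrix.transpose_sub, Matrix.transpose_one]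
      rw [show (L * M)ᵀ = L * M from hM4]
    have hcol : ∀ j, ∃ c : ℝ, (fun i => Q i j) = fun _ => c := by
      intro j
      apply (hconn _).mp
      ext e
      have h0 : (B.transpose * Q) e j = 0 := by rw [hBQ]; rfl
      simpa [Matrix.mulVec, Matrix.mul_apply, dotProduct] using h0
    choose c hc using hcol
    have hcij : ∀ i j, c j = c i := by
      intro i j
      have h1 : Q i j = c j := congrFun (hc j) i
      have h2 : Q j i = c i := congrFun (hc i) j
      have h3 : Q i j = Q j i := by
        conv_lhs => rw [← hQsym]
        exact Matrix.transpose_apply Q i j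
      rw [h1, h2] at h3; exact h3
    have i0 : Fin n := ⟨0, lt_of_lt_of_le two_pos hn⟩
    have hQω : Q.mulVec ω = 0 := by
      ext i
      have : Q.mulVec ω i = ∑ j, c i0 * ω j := by
        simp only [Matrix.mulVec, dotProduct]
        congr 1; ext j
        rw [congrFun (hc j) i, hcij i0 j]
      rw [this, ← Finset.mul_sum, hω, mul_zero]
      rfl
    rw [hQdef, Matrix.sub_mulVec, Matrix.one_mulVec, sub_eq_zero] at hQω
    exact hQω.symm
  refine ⟨⟨?_, ?_⟩, keyP⟩
  · intro h
    show η = Pcut.mulVec s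
    have : η = B.transpose.mulVec (M.mulVec ((B * Matrix.diagonal a).mulVec s)) := by
      show B.transpose.mulVec (M.mulVec ω) = _
      rw [h]
    rw [this, Matrix.mulVec_mulVec, Matrix.mulVec_mulVec]
  · intro h
    have h2 := congrArg ((B * Matrix.diagonal a).mulVec) h
    have hl : (B * Matrix.diagonal a).mulVec η = ω := by
      show (B * Matrix.diagonal a).mulVec (B.transpose.mulVec (M.mulVec ω)) = ω
      rw [Matrix.mulVec_mulVec, Matrix.mulVec_mulVec]
      have : B * Matrix.diagonal a * B.transpose * M = L * M := by rw [hL]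
      rw [this, keyω]
    have hr : (B * Matrix.diagonal a).mulVec (Pcut.mulVec s) = (B * Matrix.diagonal a).mulVec s := by
      rw [Matrix.mulVec_mulVec, keyP]
    rw [hl, hr] at h2
    exact h2
end

section
/- Let ω ∈ ℝⁿ with 1_nᵀω = 0, η = BᵀL†ω, and γ ∈ [0, π/2). Suppose z* is the unique element of Im(Bᵀ) with ‖z*‖∞ ≤ γ satisfying the flow balance equation η = P_cut sin(z*). Then ψ* = sin(z*) satisfies ‖ψ*‖∞ ≤ sin(γ), and ψ* is the unique ψ ∈ ℝ^m with ‖ψ‖∞ ≤ sin(γ) satisfying the constrained edge balance equations η = P_cut ψ and arcsin(ψ) ∈ Im(Bᵀ). -/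
open Matrix Filter Topology

/-- Let `ω ⊥ 1ₙ`, `η = BᵀL†ω`, `γ ∈ [0, π/2)`. If `z*` is the
unique element of `Im(Bᵀ)` with `‖z*‖∞ ≤ γ` satisfying the flow balance equation
`η = P_cut sin(z*)`, then `ψ* = sin(z*)` satisfies `‖ψ*‖∞ ≤ sin γ` and is the unique
`ψ` with `‖ψ‖∞ ≤ sin γ` satisfying the constrained edge balance equations
`η = P_cut ψ` and `arcsin(ψ) ∈ Im(Bᵀ)`. -/
theorem flow_balance_to_constrained_edge_balance
    {n m : ℕ} (hn : 2 ≤ n)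
    (B : Matrix (Fin n) (Fin m) ℝ)
    (hB : ∀ e : Fin m, ∃ i j : Fin n, i ≠ j ∧ B i e = 1 ∧ B j e = -1 ∧
      ∀ k : Fin n, k ≠ i → k ≠ j → B k e = 0)
    (hconn : ∀ x : Fin n → ℝ, B.transpose.mulVec x = 0 ↔ ∃ c : ℝ, x = fun _ => c)
    (a : Fin m → ℝ) (ha : ∀ e, 0 < a e)
    (M : Matrix (Fin n) (Fin n) ℝ)
    (hM1 : (B * Matrix.diagonal a * B.transpose) * M * (B * Matrix.diagonal a * B.transpose)
        = B * Matrix.diagonal a * B.transpose)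
    (hM2 : M * (B * Matrix.diagonal a * B.transpose) * M = M)
    (hM3 : (M * (B * Matrix.diagonal a * B.transpose))ᵀ = M * (B * Matrix.diagonal a * B.transpose))
    (hM4 : ((B * Matrix.diagonal a * B.transpose) * M)ᵀ = (B * Matrix.diagonal a * B.transpose) * M)
    (ω : Fin n → ℝ) (hω : ∑ i, ω i = 0)
    (γ : ℝ) (hγ : γ ∈ Set.Ico 0 (Real.pi / 2))
    (zstar : Fin m → ℝ)
    -- `z*` is a flow vector with `‖z*‖∞ ≤ γ` solving the flow balance equation
    (hz1 : ∃ x : Fin n → ℝ, zstar = B.transpose.mulVec x)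
    (hz2 : ‖zstar‖ ≤ γ)
    (hz3 : B.transpose.mulVec (M.mulVec ω) =
      (B.transpose * M * (B * Matrix.diagonal a)).mulVec (fun e => Real.sin (zstar e)))
    -- and it is unique with this property
    (hz4 : ∀ z : Fin m → ℝ, (∃ x : Fin n → ℝ, z = B.transpose.mulVec x) → ‖z‖ ≤ γ →
      B.transpose.mulVec (M.mulVec ω) =
        (B.transpose * M * (B * Matrix.diagonal a)).mulVec (fun e => Real.sin (z e)) →
      z = zstar) :
    let η : Fin m → ℝ := B.transpose.mulVec (M.mulVec ω)
    let Pcut : Matrix (Fin m) (Fin m) ℝ := B.transpose * M * (B * Matrix.diagonal a)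
    let ψstar : Fin m → ℝ := fun e => Real.sin (zstar e)
    ‖ψstar‖ ≤ Real.sin γ ∧
    η = Pcut.mulVec ψstar ∧
    (∃ x : Fin n → ℝ, (fun e => Real.arcsin (ψstar e)) = B.transpose.mulVec x) ∧
    (∀ ψ : Fin m → ℝ, ‖ψ‖ ≤ Real.sin γ → η = Pcut.mulVec ψ →
      (∃ x : Fin n → ℝ, (fun e => Real.arcsin (ψ e)) = B.transpose.mulVec x) →
      ψ = ψstar) := by
  intro η Pcut ψstar
  obtain ⟨hγ0, hγπ⟩ := hγ
  have hγle : γ ≤ Real.pi / 2 := le_of_lt hγπ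
  have hsinγ0 : 0 ≤ Real.sin γ := Real.sin_nonneg_of_nonneg_of_le_pi hγ0
    (hγle.trans (by linarith [Real.pi_pos]))
  have hzbound : ∀ e, |zstar e| ≤ γ := by
    intro e
    have := norm_le_pi_norm zstar e
    rw [Real.norm_eq_abs] at this
    exact this.trans hz2
  have hψbound : ∀ e, |ψstar e| ≤ Real.sin γ := by
    intro e
    have h1 : -(Real.pi/2) ≤ -γ := by linarith
    have h2 : γ ≤ Real.pi / 2 := hγle
    have habs := hzbound e
    rw [abs_le] at habs
    rw [abs_le]
    constructor
    · have : Real.sin (-γ) ≤ Real.sin (zstar e) :=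
        Real.sin_le_sin_of_le_of_le_pi_div_two h1 (habs.2.trans h2) habs.1
      rw [Real.sin_neg] at this
      exact this
    · exact Real.sin_le_sin_of_le_of_le_pi_div_two (by linarith [habs.1]) h2 habs.2
  have harcz : ∀ e, Real.arcsin (ψstar e) = zstar e := fun e => by
    have habs := hzbound e
    rw [abs_le] at habs
    exact Real.arcsin_sin (by linarith [habs.1]) (habs.2.trans hγle)
  refine ⟨?_, hz3, ?_, ?_⟩
  · rw [pi_norm_le_iff_of_nonneg hsinγ0]
    intro e
    rw [Real.norm_eq_abs]; exact hψbound e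
  · obtain ⟨x, hx⟩ := hz1
    exact ⟨x, by funext e; rw [harcz e]; rw [hx]⟩
  · intro ψ hψ hη hψim
    set z : Fin m → ℝ := fun e => Real.arcsin (ψ e) with hzdef
    have hψ1 : ∀ e, |ψ e| ≤ Real.sin γ := by
      intro e
      have := norm_le_pi_norm ψ e
      rw [Real.norm_eq_abs] at this
      exact this.trans hψ
    have hψle1 : ∀ e, -1 ≤ ψ e ∧ ψ e ≤ 1 := by
      intro e
      have h := abs_le.1 (hψ1 e)
      have hs1 : Real.sin γ ≤ 1 := Real.sin_le_one γ
      exact ⟨by linarith [h.1], by linarith [h.2]⟩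
    have hsinz : ∀ e, Real.sin (z e) = ψ e := fun e =>
      Real.sin_arcsin (hψle1 e).1 (hψle1 e).2
    have hzγ : ‖z‖ ≤ γ := by
      rw [pi_norm_le_iff_of_nonneg hγ0]
      intro e
      rw [Real.norm_eq_abs, abs_le]
      have h := abs_le.1 (hψ1 e)
      constructor
      · have : Real.arcsin (-(Real.sin γ)) ≤ Real.arcsin (ψ e) :=
          Real.monotone_arcsin (by linarith [h.1])
        rw [Real.arcsin_neg, Real.arcsin_sin (by linarith) hγle] at this
        exact this
      · have : Real.arcsin (ψ e) ≤ Real.arcsin (Real.sin γ) :=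
          Real.monotone_arcsin h.2
        rw [Real.arcsin_sin (by linarith) hγle] at this
        exact this
    have hzeq : z = zstar := by
      apply hz4 z hψim hzγ
      have : (fun e => Real.sin (z e)) = ψ := funext hsinz
      rw [this]; exact hη
    funext e
    rw [← hsinz e, hzeq]
end

section
/- Let ω ∈ ℝⁿ with 1_nᵀω = 0 and γ ∈ [0, π/2). If φ* ∈ ℝ^m satisfies ‖φ*‖∞ ≤ sin(γ) and the unconstrained edge balance equation BᵀL†ω = P_cut φ* + P_cyc arcsin(φ*), then there exists x* ∈ ℝⁿ with 1_nᵀx* = 0 such that sin(Bᵀx*) = φ*, ‖Bᵀx*‖∞ ≤ γ, and ω = B𝒜 sin(Bᵀx*); i.e., x* is a synchronization manifold of the Kuramoto model in S^G(γ). -/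
open Matrix Filter Topology

/-- Let `ω ⊥ 1ₙ` and `γ ∈ [0, π/2)`. If `φ*` satisfies
`‖φ*‖∞ ≤ sin γ` and the unconstrained edge balance equation
`BᵀL†ω = P_cut φ* + P_cyc arcsin(φ*)`, then there exists `x* ⊥ 1ₙ` with
`sin(Bᵀx*) = φ*`, `‖Bᵀx*‖∞ ≤ γ`, and `ω = B𝒜 sin(Bᵀx*)`; i.e. `x*` is a
synchronization manifold of the Kuramoto model in `S^G(γ)`. -/
theorem unconstrained_edge_balance_to_sync_manifold
    {n m : ℕ} (hn : 2 ≤ n)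
    (B : Matrix (Fin n) (Fin m) ℝ)
    (hB : ∀ e : Fin m, ∃ i j : Fin n, i ≠ j ∧ B i e = 1 ∧ B j e = -1 ∧
      ∀ k : Fin n, k ≠ i → k ≠ j → B k e = 0)
    (hconn : ∀ x : Fin n → ℝ, B.transpose.mulVec x = 0 ↔ ∃ c : ℝ, x = fun _ => c)
    (a : Fin m → ℝ) (ha : ∀ e, 0 < a e)
    (M : Matrix (Fin n) (Fin n) ℝ)
    (hM1 : (B * Matrix.diagonal a * B.transpose) * M * (B * Matrix.diagonal a * B.transpose)
        = B * Matrix.diagonal a * B.transpose)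
    (hM2 : M * (B * Matrix.diagonal a * B.transpose) * M = M)
    (hM3 : (M * (B * Matrix.diagonal a * B.transpose))ᵀ = M * (B * Matrix.diagonal a * B.transpose))
    (hM4 : ((B * Matrix.diagonal a * B.transpose) * M)ᵀ = (B * Matrix.diagonal a * B.transpose) * M)
    (ω : Fin n → ℝ) (hω : ∑ i, ω i = 0)
    (γ : ℝ) (hγ : γ ∈ Set.Ico 0 (Real.pi / 2))
    (φstar : Fin m → ℝ)
    (hφ1 : ‖φstar‖ ≤ Real.sin γ)
    (hφ2 : B.transpose.mulVec (M.mulVec ω) =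
      (B.transpose * M * (B * Matrix.diagonal a)).mulVec φstar +
      ((1 : Matrix (Fin m) (Fin m) ℝ) - B.transpose * M * (B * Matrix.diagonal a)).mulVec
        (fun e => Real.arcsin (φstar e))) :
    ∃ xstar : Fin n → ℝ,
      (∑ i, xstar i = 0) ∧
      (fun e => Real.sin (B.transpose.mulVec xstar e)) = φstar ∧
      ‖B.transpose.mulVec xstar‖ ≤ γ ∧
      ω = (B * Matrix.diagonal a).mulVec (fun e => Real.sin (B.transpose.mulVec xstar e)) := by
  have hsinγ : 0 ≤ Real.sin γ := Real.sin_nonneg_of_nonneg_of_le_pi hγ.1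
    (le_trans hγ.2.le (by linarith [Real.pi_pos]))
  -- entrywise bounds on φstar
  have hφbound : ∀ e, |φstar e| ≤ Real.sin γ := fun e =>
    le_trans (by simpa using norm_le_pi_norm φstar e) hφ1
  have hφ11 : ∀ e, -1 ≤ φstar e ∧ φstar e ≤ 1 := by
    intro e
    have h1 := hφbound e
    have h2 : Real.sin γ ≤ 1 := Real.sin_le_one γ
    constructor <;> cases' abs_le.mp h1 with hl hr <;> linarith
  set ψ : Fin m → ℝ := fun e => Real.arcsin (φstar e) with hψdef
  set D : Matrix (Fin m) (Fin m) ℝ := Matrix.diagonal a with hD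
  set L : Matrix (Fin n) (Fin n) ℝ := B * D * Bᵀ with hL
  -- column sums of B vanish
  have hBsum : ∀ e, ∑ i, B i e = 0 := by
    intro e
    obtain ⟨i, j, hij, hi, hj, hz⟩ := hB e
    have hrep : ∀ k, B k e = (if k = i then (1:ℝ) else 0) + (if k = j then (-1:ℝ) else 0) := by
      intro k
      by_cases hki : k = i
      · subst hki
        simp [hij, hi]
      · by_cases hkj : k = j
        · subst hkj
          simp [hj, Ne.symm hij]
        · simp [hki, hkj, hz k hki hkj]
    calc ∑ k, B k e = ∑ k, ((if k = i then (1:ℝ) else 0) + (if k = j then (-1:ℝ) else 0)) :=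
          Finset.sum_congr rfl (fun k _ => hrep k)
    _ = 0 := by
      rw [Finset.sum_add_distrib, Finset.sum_ite_eq' Finset.univ i (fun _ => (1:ℝ)),
        Finset.sum_ite_eq' Finset.univ j (fun _ => (-1:ℝ))]
      simp
  -- sums of B *ᵥ z vanish
  have hsumB : ∀ z : Fin m → ℝ, ∑ i, (B.mulVec z) i = 0 := by
    intro z
    simp only [Matrix.mulVec, dotProduct]
    rw [Finset.sum_comm]
    apply Finset.sum_eq_zero
    intro e _
    rw [← Finset.sum_mul, hBsum e, zero_mul]
  -- transpose of B kills constants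
  have hBtconst : ∀ c : ℝ, Bᵀ.mulVec (fun _ => c) = 0 := by
    intro c
    funext e
    simp only [Matrix.mulVec, dotProduct, Matrix.transpose_apply, Pi.zero_apply]
    rw [← Finset.sum_mul, hBsum e, zero_mul]
  -- key kernel lemma
  have hkey : ∀ v : Fin n → ℝ, v ⬝ᵥ (L.mulVec v) = 0 → ∑ i, v i = 0 → v = 0 := by
    intro v hv hs
    have hexp : v ⬝ᵥ (L.mulVec v) = ∑ e, a e * (Bᵀ.mulVec v e)^2 := by
      rw [hL, ← Matrix.mulVec_mulVec, ← Matrix.mulVec_mulVec, Matrix.dotProduct_mulVec,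
        ← Matrix.mulVec_transpose]
      simp only [dotProduct, hD, Matrix.mulVec_diagonal]
      apply Finset.sum_congr rfl
      intro e _
      ring
    rw [hexp] at hv
    have hzero : ∀ e, Bᵀ.mulVec v e = 0 := by
      intro e
      have h := (Finset.sum_eq_zero_iff_of_nonneg (fun e _ =>
        mul_nonneg (ha e).le (sq_nonneg _))).mp hv e (Finset.mem_univ e)
      have := (mul_eq_zero.mp h).resolve_left (ne_of_gt (ha e))
      exact pow_eq_zero_iff (by norm_num) |>.mp this
    obtain ⟨c, hc⟩ := (hconn v).mp (funext hzero)
    rw [hc] at hs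
    simp only [Finset.sum_const, Finset.card_univ, Fintype.card_fin, nsmul_eq_mul] at hs
    have hn0 : (n : ℝ) ≠ 0 := by
      have : 0 < n := lt_of_lt_of_le (by norm_num) hn
      exact_mod_cast this.ne'
    have hc0 : c = 0 := by
      rcases mul_eq_zero.mp hs with h | h
      · exact absurd h hn0
      · exact h
    rw [hc, hc0]
    rfl
  -- the projection L*M fixes every mean-zero vector
  have hproj : ∀ w : Fin n → ℝ, (∑ i, w i = 0) → (L * M).mulVec w = w := by
    intro w hw
    set v : Fin n → ℝ := w - (L * M).mulVec w with hv
    have hPv : (L * M).mulVec v = 0 := by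
      rw [hv, Matrix.mulVec_sub, Matrix.mulVec_mulVec]
      have h : L * M * (L * M) = L * M := by
        rw [← mul_assoc, hM1]
      rw [h, sub_self]
    have hvLv : v ⬝ᵥ (L.mulVec v) = 0 := by
      have hLP : L.mulVec v = (L * M).mulVec (L.mulVec v) := by
        rw [Matrix.mulVec_mulVec, hM1]
      rw [hLP, Matrix.dotProduct_mulVec, ← Matrix.mulVec_transpose, hM4, hPv]
      exact zero_dotProduct _
    have hsv : ∑ i, v i = 0 := by
      rw [hv]
      simp only [Pi.sub_apply, Finset.sum_sub_distrib, hw]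
      have : ∑ i, ((L * M).mulVec w) i = 0 := by
        rw [show L * M = B * (D * Bᵀ * M) by rw [hL]; simp only [Matrix.mul_assoc]]
        rw [← Matrix.mulVec_mulVec]
        exact hsumB _
      rw [this]; ring
    have := hkey v hvLv hsv
    rw [hv] at this
    have := sub_eq_zero.mp this
    exact this.symm
  -- construct xstar
  set u : Fin n → ℝ := M.mulVec ω + M.mulVec ((B * D).mulVec (ψ - φstar)) with hu
  set s : ℝ := (∑ i, u i) / n with hs
  set xstar : Fin n → ℝ := u - (fun _ => s) with hx
  -- Bᵀ xstar = ψ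
  have hC : ∀ w : Fin m → ℝ, Bᵀ.mulVec (M.mulVec ((B * D).mulVec w)) =
      (Bᵀ * M * (B * D)).mulVec w := by
    intro w
    rw [Matrix.mulVec_mulVec, Matrix.mulVec_mulVec, Matrix.mul_assoc]
  have hBx : Bᵀ.mulVec xstar = ψ := by
    rw [hx, Matrix.mulVec_sub, hBtconst s, sub_zero, hu, Matrix.mulVec_add, hφ2, hC,
      Matrix.sub_mulVec, Matrix.one_mulVec, Matrix.mulVec_sub]
    funext e
    simp only [Pi.add_apply, Pi.sub_apply]
    ring
  refine ⟨xstar, ?_, ?_, ?_, ?_⟩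
  · -- mean zero
    rw [hx]
    simp only [Pi.sub_apply, Finset.sum_sub_distrib, Finset.sum_const, Finset.card_univ,
      Fintype.card_fin, nsmul_eq_mul, hs]
    have hn0 : (n : ℝ) ≠ 0 := by
      have : 0 < n := lt_of_lt_of_le (by norm_num) hn
      exact_mod_cast this.ne'
    field_simp
    ring
  · -- sin (Bᵀ xstar) = φstar
    funext e
    rw [hBx]
    exact Real.sin_arcsin (hφ11 e).1 (hφ11 e).2
  · -- norm bound
    rw [hBx]
    rw [pi_norm_le_iff_of_nonneg hγ.1]
    intro e
    rw [Real.norm_eq_abs, abs_le]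
    have hγs : Real.arcsin (Real.sin γ) = γ :=
      Real.arcsin_sin (by linarith [Real.pi_pos, hγ.1]) hγ.2.le
    constructor
    · have : Real.arcsin (-Real.sin γ) ≤ Real.arcsin (φstar e) :=
        Real.monotone_arcsin (by linarith [(abs_le.mp (hφbound e)).1])
      rw [Real.arcsin_neg, hγs] at this
      exact this
    · have : Real.arcsin (φstar e) ≤ Real.arcsin (Real.sin γ) :=
        Real.monotone_arcsin (abs_le.mp (hφbound e)).2
      rw [hγs] at this
      exact this
  · -- ω = B D φstar (after sin∘arcsin)
    have hsin : (fun e => Real.sin (Bᵀ.mulVec xstar e)) = φstar := by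
      funext e
      rw [hBx]
      exact Real.sin_arcsin (hφ11 e).1 (hφ11 e).2
    rw [hsin]
    -- apply (B*D) *ᵥ to hφ2
    have h1 : (B * D).mulVec (Bᵀ.mulVec (M.mulVec ω)) = (L * M).mulVec ω := by
      rw [Matrix.mulVec_mulVec, Matrix.mulVec_mulVec, hL]
    have h2 : ∀ w : Fin m → ℝ, (B * D).mulVec ((Bᵀ * M * (B * D)).mulVec w) =
        (L * M).mulVec ((B * D).mulVec w) := by
      intro w
      rw [Matrix.mulVec_mulVec, Matrix.mulVec_mulVec, hL]
      congr 1
      simp only [Matrix.mul_assoc]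
    have hsBD : ∀ w : Fin m → ℝ, ∑ i, ((B * D).mulVec w) i = 0 := by
      intro w
      rw [← Matrix.mulVec_mulVec]
      exact hsumB _
    have key := congrArg (fun z => (B * D).mulVec z) hφ2
    simp only [Matrix.mulVec_add] at key
    rw [h1, Matrix.sub_mulVec, Matrix.one_mulVec, Matrix.mulVec_sub, h2, h2,
      hproj ω hω, hproj _ (hsBD φstar), hproj _ (hsBD ψ)] at key
    rw [key]
    funext i
    simp only [Pi.add_apply, Pi.sub_apply]
    ring
end

section
/- The function h : [0,∞) → ℝ defined by h(x) = (x+1)·√(1 − (x/(x+1))²) − x·arccos(x/(x+1)) is continuous and strictly monotonically decreasing, satisfies h(0) = 1 and h(x) > 0 for all x ≥ 0, and h(x) → 0 as x → ∞. Consequently h is a bijection from [0,∞) onto (0,1] and admits an inverse h⁻¹ : (0,1] → [0,∞). -/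
open Filter Topology

/-- The scalar function `h(x) = (x+1)·√(1 − (x/(x+1))²) − x·arccos(x/(x+1))`. -/
noncomputable def hfun (x : ℝ) : ℝ :=
  (x + 1) * Real.sqrt (1 - (x / (x + 1)) ^ 2) - x * Real.arccos (x / (x + 1))

lemma hfun_u_nonneg {x : ℝ} (hx : 0 ≤ x) : 0 ≤ x / (x + 1) := by positivity

lemma hfun_u_lt_one {x : ℝ} (hx : 0 ≤ x) : x / (x + 1) < 1 := by
  rw [div_lt_one (by linarith)]; linarith

lemma hfun_hasDerivAt {x : ℝ} (hx : 0 ≤ x) :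
    HasDerivAt hfun
      (Real.sqrt (1 - (x / (x + 1)) ^ 2) - Real.arccos (x / (x + 1))) x := by
  have hx1 : (0:ℝ) < x + 1 := by linarith
  have hu0 : 0 ≤ x / (x + 1) := hfun_u_nonneg hx
  have hu1 : x / (x + 1) < 1 := hfun_u_lt_one hx
  have hpos : 0 < 1 - (x / (x + 1)) ^ 2 := by nlinarith
  have hs : 0 < Real.sqrt (1 - (x / (x + 1)) ^ 2) := Real.sqrt_pos.2 hpos
  have hu : HasDerivAt (fun y : ℝ => y / (y + 1)) (1 / (x + 1) ^ 2) x := by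
    have h : HasDerivAt (fun y : ℝ => y / (y + 1)) ((1 * (x + 1) - x * 1) / (x + 1) ^ 2) x :=
      (hasDerivAt_id x).div ((hasDerivAt_id x).add_const 1) hx1.ne'
    convert h using 1
    field_simp
    ring
  have hinner : HasDerivAt (fun y : ℝ => 1 - (y / (y + 1)) ^ 2)
      (0 - 2 * (x / (x + 1)) ^ 1 * (1 / (x + 1) ^ 2)) x :=
    (hasDerivAt_const x 1).sub (hu.pow 2)
  have hsq : HasDerivAt (fun y : ℝ => Real.sqrt (1 - (y / (y + 1)) ^ 2))
      ((0 - 2 * (x / (x + 1)) ^ 1 * (1 / (x + 1) ^ 2)) /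
        (2 * Real.sqrt (1 - (x / (x + 1)) ^ 2))) x :=
    hinner.sqrt hpos.ne'
  have harc : HasDerivAt (fun y : ℝ => Real.arccos (y / (y + 1)))
      (-(1 / Real.sqrt (1 - (x / (x + 1)) ^ 2)) * (1 / (x + 1) ^ 2)) x :=
    HasDerivAt.comp (h₂ := Real.arccos) x (Real.hasDerivAt_arccos (by linarith) hu1.ne) hu
  have h1 : HasDerivAt (fun y : ℝ => (y + 1) * Real.sqrt (1 - (y / (y + 1)) ^ 2))
      (1 * Real.sqrt (1 - (x / (x + 1)) ^ 2) + (x + 1) *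
        ((0 - 2 * (x / (x + 1)) ^ 1 * (1 / (x + 1) ^ 2)) /
          (2 * Real.sqrt (1 - (x / (x + 1)) ^ 2)))) x :=
    ((hasDerivAt_id x).add_const 1).mul hsq
  have h2 : HasDerivAt (fun y : ℝ => y * Real.arccos (y / (y + 1)))
      (1 * Real.arccos (x / (x + 1)) +
        x * (-(1 / Real.sqrt (1 - (x / (x + 1)) ^ 2)) * (1 / (x + 1) ^ 2))) x :=
    (hasDerivAt_id x).mul harc
  have h3 : HasDerivAt hfun
      (1 * Real.sqrt (1 - (x / (x + 1)) ^ 2) + (x + 1) *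
        ((0 - 2 * (x / (x + 1)) ^ 1 * (1 / (x + 1) ^ 2)) /
          (2 * Real.sqrt (1 - (x / (x + 1)) ^ 2))) -
        (1 * Real.arccos (x / (x + 1)) +
          x * (-(1 / Real.sqrt (1 - (x / (x + 1)) ^ 2)) * (1 / (x + 1) ^ 2)))) x :=
    h1.sub h2
  convert h3 using 1
  generalize Real.sqrt (1 - (x / (x + 1)) ^ 2) = s at hs ⊢
  generalize Real.arccos (x / (x + 1)) = θ
  field_simp
  ring

lemma hfun_deriv_neg {x : ℝ} (hx : 0 ≤ x) :
    Real.sqrt (1 - (x / (x + 1)) ^ 2) - Real.arccos (x / (x + 1)) < 0 := by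
  have hu1 : x / (x + 1) < 1 := hfun_u_lt_one hx
  have hθ : 0 < Real.arccos (x / (x + 1)) := Real.arccos_pos.2 hu1
  have := Real.sin_lt hθ
  rw [Real.sin_arccos] at this
  linarith

lemma hfun_contOn : ContinuousOn hfun (Set.Ici 0) := fun x hx =>
  (hfun_hasDerivAt hx).continuousAt.continuousWithinAt

lemma hfun_anti : StrictAntiOn hfun (Set.Ici 0) := by
  apply strictAntiOn_of_deriv_neg (convex_Ici 0) hfun_contOn
  intro x hx
  rw [interior_Ici] at hx
  rw [(hfun_hasDerivAt hx.le).deriv]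
  exact hfun_deriv_neg hx.le

lemma hfun_zero : hfun 0 = 1 := by
  norm_num [hfun]

lemma hfun_pos {x : ℝ} (hx : 0 ≤ x) : 0 < hfun x := by
  rcases eq_or_lt_of_le hx with rfl | hx'
  · rw [hfun_zero]; norm_num
  · have hx1 : (0:ℝ) < x + 1 := by linarith
    set u := x / (x + 1) with hu_def
    have hu0 : 0 < u := by positivity
    have hu1 : u < 1 := hfun_u_lt_one hx
    have hθ1 : Real.arccos u < Real.pi / 2 := Real.arccos_lt_pi_div_two.2 hu0
    have hθ0 : 0 < Real.arccos u := Real.arccos_pos.2 hu1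
    have htan := Real.lt_tan hθ0 hθ1
    rw [Real.tan_eq_sin_div_cos, Real.cos_arccos (by linarith) hu1.le,
      Real.sin_arccos] at htan
    have key : Real.arccos u * u < Real.sqrt (1 - u ^ 2) :=
      (lt_div_iff₀ hu0).1 htan
    have h5 : (x + 1) * (Real.arccos u * u) < (x + 1) * Real.sqrt (1 - u ^ 2) :=
      (mul_lt_mul_iff_right₀ hx1).2 key
    have hxu : (x + 1) * u = x := by rw [hu_def]; field_simp
    unfold hfun
    rw [← hu_def]
    nlinarith

lemma hfun_tendsto : Tendsto hfun atTop (𝓝 0) := by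
  have hu_lim : Tendsto (fun x : ℝ => x / (x + 1)) atTop (𝓝 1) := by
    have h1 : Tendsto (fun x : ℝ => 1 - 1 / (x + 1)) atTop (𝓝 (1 - 0)) := by
      refine tendsto_const_nhds.sub ?_
      simpa [one_div, Pi.inv_def] using
        (tendsto_atTop_add_const_right atTop (1:ℝ) tendsto_id).inv_tendsto_atTop
    rw [sub_zero] at h1
    refine h1.congr' ?_
    filter_upwards [eventually_gt_atTop (0:ℝ)] with x hx
    field_simp
    ring
  have hb : Tendsto (fun x : ℝ => Real.sqrt (1 - (x / (x + 1)) ^ 2)) atTop (𝓝 0) := by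
    have hc : Continuous (fun t : ℝ => Real.sqrt (1 - t ^ 2)) :=
      Real.continuous_sqrt.comp (continuous_const.sub (continuous_pow 2))
    have := (hc.tendsto 1).comp hu_lim
    simpa [Function.comp_def] using this
  refine tendsto_of_tendsto_of_tendsto_of_le_of_le' tendsto_const_nhds hb ?_ ?_
  · filter_upwards [eventually_ge_atTop (0:ℝ)] with x hx
    exact (hfun_pos hx).le
  · filter_upwards [eventually_ge_atTop (0:ℝ)] with x hx
    have hs : Real.sqrt (1 - (x / (x + 1)) ^ 2) ≤ Real.arccos (x / (x + 1)) := by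
      have := Real.sin_le (Real.arccos_nonneg (x / (x + 1)))
      rwa [Real.sin_arccos] at this
    have : x * Real.sqrt (1 - (x / (x + 1)) ^ 2) ≤ x * Real.arccos (x / (x + 1)) :=
      mul_le_mul_of_nonneg_left hs hx
    unfold hfun
    linarith

lemma hfun_mapsTo : Set.MapsTo hfun (Set.Ici 0) (Set.Ioc 0 1) := by
  intro x hx
  refine ⟨hfun_pos hx, ?_⟩
  rcases eq_or_lt_of_le (show (0:ℝ) ≤ x from hx) with rfl | hx'
  · rw [hfun_zero]
  · rw [← hfun_zero]
    exact (hfun_anti (Set.self_mem_Ici) hx hx').le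

lemma hfun_surjOn : Set.SurjOn hfun (Set.Ici 0) (Set.Ioc 0 1) := by
  intro y hy
  obtain ⟨M, hM1, hM0⟩ :=
    ((hfun_tendsto.eventually_lt_const hy.1).and (eventually_ge_atTop (0:ℝ))).exists
  have hsub : Set.Icc (0:ℝ) M ⊆ Set.Ici 0 := fun z hz => hz.1
  have := intermediate_value_Icc' hM0 (hfun_contOn.mono hsub)
  have hy' : y ∈ Set.Icc (hfun M) (hfun 0) := ⟨hM1.le, by rw [hfun_zero]; exact hy.2⟩
  obtain ⟨x, hx, hxy⟩ := this hy'
  exact ⟨x, hx.1, hxy⟩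

/-- The function `h` is continuous and strictly decreasing on
`[0,∞)`, satisfies `h(0) = 1`, `h(x) > 0` for all `x ≥ 0`, and `h(x) → 0` as
`x → ∞`; consequently `h` is a bijection from `[0,∞)` onto `(0,1]` and admits an
inverse `h⁻¹ : (0,1] → [0,∞)`. -/
theorem hfun_properties :
    ContinuousOn hfun (Set.Ici 0) ∧
    StrictAntiOn hfun (Set.Ici 0) ∧
    hfun 0 = 1 ∧
    (∀ x : ℝ, 0 ≤ x → 0 < hfun x) ∧
    Tendsto hfun atTop (𝓝 0) ∧
    Set.BijOn hfun (Set.Ici 0) (Set.Ioc 0 1) ∧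
    ∃ g : ℝ → ℝ, Set.InvOn g hfun (Set.Ici 0) (Set.Ioc 0 1) := by
  have hbij : Set.BijOn hfun (Set.Ici 0) (Set.Ioc 0 1) :=
    ⟨hfun_mapsTo, hfun_anti.injOn, hfun_surjOn⟩
  exact ⟨hfun_contOn, hfun_anti, hfun_zero, fun x hx => hfun_pos hx, hfun_tendsto,
    hbij, _, hbij.invOn_invFunOn⟩
end

section
/- For every real r with |r| ≤ 1, the arcsine function is given by the convergent power series arcsin(r) = Σ_{i=0}^{∞} ((2i−1)!!/((2i)!!·(2i+1)))·r^{2i+1}, where the double factorial is n!! = Π_{k=0}^{⌈n/2⌉−1}(n−2k) with the conventions 0!! = 1 and (−1)!! = 1 (so the i = 0 coefficient is 1). -/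
open Real Filter Topology

noncomputable def asb (i : ℕ) : ℝ :=
  (Nat.doubleFactorial (2 * i - 1) : ℝ) / (Nat.doubleFactorial (2 * i) : ℝ)

noncomputable def asc (i : ℕ) : ℝ := asb i / (2 * i + 1)

lemma asc_eq (i : ℕ) :
    asc i = (Nat.doubleFactorial (2 * i - 1) : ℝ) /
      ((Nat.doubleFactorial (2 * i) : ℝ) * (2 * i + 1)) := by
  rw [asc, asb, div_div]

lemma asb_pos (i : ℕ) : 0 < asb i :=
  div_pos (by exact_mod_cast Nat.doubleFactorial_pos _) (by exact_mod_cast Nat.doubleFactorial_pos _)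

lemma asb_zero : asb 0 = 1 := by simp [asb, Nat.doubleFactorial]

lemma asb_rec (i : ℕ) : (2 * i + 2) * asb (i + 1) = (2 * i + 1) * asb i := by
  have h1 : 2 * (i + 1) - 1 = 2 * i + 1 := by omega
  have h2 : 2 * (i + 1) = 2 * i + 2 := by ring
  have h3 : (Nat.doubleFactorial (2 * i + 1) : ℝ) = (2 * i + 1) * Nat.doubleFactorial (2 * i - 1) := by
    rcases i with _ | j
    · simp [Nat.doubleFactorial]
    · have : 2 * (j + 1) + 1 = (2 * j + 1) + 2 := by ring
      rw [this, Nat.doubleFactorial_add_two]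
      have : 2 * (j + 1) - 1 = 2 * j + 1 := by omega
      rw [this]
      push_cast; ring
  have h4 : (Nat.doubleFactorial (2 * i + 2) : ℝ) = (2 * i + 2) * Nat.doubleFactorial (2 * i) := by
    rw [Nat.doubleFactorial_add_two]; push_cast; ring
  rw [asb, asb, h1, h2, h3, h4]
  have d1 : (Nat.doubleFactorial (2 * i) : ℝ) ≠ 0 := by exact_mod_cast (Nat.doubleFactorial_pos _).ne'
  field_simp

lemma asb_le_one (i : ℕ) : asb i ≤ 1 := by
  induction i with
  | zero => rw [asb_zero]
  | succ n ih =>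
    have h := asb_rec n
    have h2 : (0:ℝ) < 2 * n + 2 := by positivity
    have : asb (n + 1) = (2 * n + 1) / (2 * n + 2) * asb n := by
      field_simp at h ⊢; linarith [h]
    rw [this]
    have hle : (2 * (n:ℝ) + 1) / (2 * n + 2) ≤ 1 := by
      rw [div_le_one h2]; linarith
    calc (2 * (n:ℝ) + 1) / (2 * n + 2) * asb n ≤ 1 * asb n :=
          mul_le_mul_of_nonneg_right hle (asb_pos n).le
      _ ≤ 1 := by rw [one_mul]; exact ih

lemma two_i_one_pos (i : ℕ) : (0:ℝ) < 2 * i + 1 := by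
  have := Nat.cast_nonneg (α := ℝ) i; linarith

lemma asc_pos (i : ℕ) : 0 < asc i := div_pos (asb_pos i) (two_i_one_pos i)

lemma asc_le_one (i : ℕ) : asc i ≤ 1 := by
  have h1 : (1:ℝ) ≤ 2 * i + 1 := by have := Nat.cast_nonneg (α := ℝ) i; linarith
  have : asc i ≤ asb i / 1 := div_le_div_of_nonneg_left (asb_pos i).le one_pos h1
  rw [div_one] at this
  exact this.trans (asb_le_one i)

lemma summable_asu {x : ℝ} (hx : |x| < 1) : Summable fun i => asb i * x ^ (2 * i) := by
  apply Summable.of_norm_bounded (g := fun i => (x ^ 2) ^ i)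
  · exact summable_geometric_of_lt_one (by positivity) (by nlinarith [abs_nonneg x, sq_abs x])
  · intro i
    rw [norm_mul, ← pow_mul]
    have h1 : ‖x ^ (2 * i)‖ ≤ 1 ^ (2 * i) := by
      rw [norm_pow]; exact pow_le_pow_left₀ (norm_nonneg x) (by simpa using hx.le) _
    have h2 : (0:ℝ) ≤ x ^ (2 * i) := by rw [pow_mul]; positivity
    calc ‖asb i‖ * ‖x ^ (2*i)‖ ≤ 1 * ‖x ^ (2*i)‖ := by
          apply mul_le_mul_of_nonneg_right _ (norm_nonneg _)
          rw [Real.norm_eq_abs, abs_of_pos (asb_pos i)]; exact asb_le_one i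
      _ = x ^ (2 * i) := by rw [one_mul, Real.norm_eq_abs, abs_of_nonneg h2]

lemma summable_asg {x : ℝ} (hx : |x| < 1) : Summable fun i => asc i * x ^ (2 * i + 1) := by
  apply Summable.of_norm_bounded (g := fun i => (x ^ 2) ^ i)
  · exact summable_geometric_of_lt_one (by positivity) (by nlinarith [abs_nonneg x, sq_abs x])
  · intro i
    rw [norm_mul]
    have h2 : ((x:ℝ) ^ 2) ^ i = |x| ^ (2 * i) := by
      rw [← abs_pow, ← pow_mul]; rw [abs_of_nonneg (by rw [pow_mul]; positivity)]
    have h3 : ‖x ^ (2 * i + 1)‖ = |x| ^ (2 * i) * |x| := by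
      rw [Real.norm_eq_abs, abs_pow, pow_succ]
    calc ‖asc i‖ * ‖x ^ (2 * i + 1)‖ ≤ 1 * ‖x ^ (2 * i + 1)‖ := by
          apply mul_le_mul_of_nonneg_right _ (norm_nonneg _)
          rw [Real.norm_eq_abs, abs_of_pos (asc_pos i)]; exact asc_le_one i
      _ = |x| ^ (2 * i) * |x| := by rw [one_mul, h3]
      _ ≤ |x| ^ (2 * i) * 1 := by
          apply mul_le_mul_of_nonneg_left hx.le (by positivity)
      _ = (x ^ 2) ^ i := by rw [mul_one, h2]

lemma dasu_bound {t : ℝ} (ht0 : 0 < t) {y : ℝ} (hy : |y| ≤ t) (n : ℕ) :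
    ‖asb n * ((2 * n) * y ^ (2 * n - 1))‖ ≤ 2 / t * (n * (t ^ 2) ^ n) := by
  rcases n with _ | m
  · simp
  · have hn1 : 2 * (m + 1) - 1 = 2 * m + 1 := by omega
    have hyt : |y| ^ (2 * m + 1) ≤ t ^ (2 * m + 1) := pow_le_pow_left₀ (abs_nonneg y) hy _
    have h1 : ‖asb (m+1) * ((2 * (m+1:ℕ)) * y ^ (2 * (m+1) - 1))‖
        ≤ (2 * (m+1:ℕ)) * t ^ (2 * m + 1) := by
      rw [norm_mul, norm_mul, hn1]
      have hb : ‖asb (m+1)‖ ≤ 1 := by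
        rw [Real.norm_eq_abs, abs_of_pos (asb_pos _)]; exact asb_le_one _
      have hya : ‖y ^ (2 * m + 1)‖ = |y| ^ (2 * m + 1) := by rw [Real.norm_eq_abs, abs_pow]
      have hnn : ‖(2 * ((m:ℝ) + 1))‖ = 2 * ((m:ℝ) + 1) := by
        rw [Real.norm_eq_abs, abs_of_pos (by positivity)]
      push_cast
      rw [hya, hnn]
      calc ‖asb (m+1)‖ * (2 * ((m:ℝ)+1) * |y| ^ (2*m+1))
          ≤ 1 * (2 * ((m:ℝ)+1) * |y| ^ (2*m+1)) := by
            apply mul_le_mul_of_nonneg_right hb (by positivity)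
        _ = 2 * ((m:ℝ)+1) * |y| ^ (2*m+1) := one_mul _
        _ ≤ 2 * ((m:ℝ)+1) * t ^ (2*m+1) :=
            mul_le_mul_of_nonneg_left hyt (by positivity)
    refine h1.trans (le_of_eq ?_)
    have h2 : (t ^ 2) ^ (m + 1) = t ^ (2 * m + 1) * t := by
      rw [← pow_mul, show 2 * (m + 1) = (2 * m + 1) + 1 from by ring, pow_succ]
    rw [h2]
    push_cast
    field_simp

lemma summable_U {t : ℝ} (ht0 : 0 < t) (ht : t < 1) :
    Summable (fun n : ℕ => 2 / t * (n * (t ^ 2) ^ n)) := by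
  apply Summable.mul_left
  exact (hasSum_coe_mul_geometric_of_norm_lt_one
    (by rw [Real.norm_eq_abs, abs_of_pos (by positivity)]; nlinarith)).summable

lemma summable_dasu {x : ℝ} (hx : |x| < 1) :
    Summable fun i => asb i * ((2 * i) * x ^ (2 * i - 1)) := by
  set t := (|x| + 1) / 2 with htdef
  have ht0 : 0 < t := by positivity
  have ht : t < 1 := by rw [htdef]; linarith
  have hxt : |x| ≤ t := by rw [htdef]; linarith
  exact Summable.of_norm_bounded (summable_U ht0 ht) (fun n => dasu_bound ht0 hxt n)

noncomputable def asU : ℝ → ℝ := fun z => ∑' i, asb i * z ^ (2 * i)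
noncomputable def asdU : ℝ → ℝ := fun z => ∑' i, asb i * ((2 * i) * z ^ (2 * i - 1))
noncomputable def asG : ℝ → ℝ := fun z => ∑' i, asc i * z ^ (2 * i + 1)

lemma ball_abs {t x : ℝ} (hx : x ∈ Metric.ball (0:ℝ) t) : |x| < t := by
  rwa [Metric.mem_ball, Real.dist_eq, sub_zero] at hx

lemma hasDerivAt_asU {t : ℝ} (ht0 : 0 < t) (ht : t < 1) {x : ℝ}
    (hx : x ∈ Metric.ball (0:ℝ) t) : HasDerivAt asU (asdU x) x := by
  apply hasDerivAt_tsum_of_isPreconnected (summable_U ht0 ht) Metric.isOpen_ball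
    (convex_ball (0:ℝ) t).isPreconnected
    (g := fun n z => asb n * z ^ (2 * n))
    (g' := fun n y => asb n * ((2 * n) * y ^ (2 * n - 1)))
    (y₀ := 0)
  · intro n y _
    have h := (hasDerivAt_pow (2 * n) y).const_mul (asb n)
    convert h using 1
    · rfl
    push_cast; ring
  · intro n y hy
    exact dasu_bound ht0 (ball_abs hy).le n
  · exact Metric.mem_ball_self ht0
  · exact summable_asu (by simp)
  · exact hx

lemma hasDerivAt_asG {t : ℝ} (ht0 : 0 < t) (ht : t < 1) {x : ℝ}
    (hx : x ∈ Metric.ball (0:ℝ) t) : HasDerivAt asG (asU x) x := by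
  apply hasDerivAt_tsum_of_isPreconnected
    (summable_geometric_of_lt_one (r := t ^ 2) (by positivity) (by nlinarith))
    Metric.isOpen_ball (convex_ball (0:ℝ) t).isPreconnected
    (g := fun n z => asc n * z ^ (2 * n + 1))
    (g' := fun n y => asb n * y ^ (2 * n))
    (y₀ := 0)
  · intro n y _
    have h := (hasDerivAt_pow (2 * n + 1) y).const_mul (asc n)
    convert h using 1
    · rfl
    have h2 : asc n * (2 * n + 1) = asb n := by
      rw [asc, div_mul_cancel₀]
      exact (two_i_one_pos n).ne'
    simp only [Nat.add_sub_cancel] at h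
    rw [← h2]; push_cast; ring
  · intro n y hy
    have hyt : |y| ≤ t := (ball_abs hy).le
    rw [norm_mul]
    have hb : ‖asb n‖ ≤ 1 := by
      rw [Real.norm_eq_abs, abs_of_pos (asb_pos _)]; exact asb_le_one _
    have hy2 : ‖y ^ (2 * n)‖ ≤ (t ^ 2) ^ n := by
      rw [Real.norm_eq_abs, abs_pow, pow_mul, ← sq_abs]
      exact pow_le_pow_left₀ (by positivity) (by rw [abs_abs]; nlinarith [abs_nonneg y, hyt]) n
    calc ‖asb n‖ * ‖y ^ (2 * n)‖ ≤ 1 * ‖y ^ (2 * n)‖ :=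
          mul_le_mul_of_nonneg_right hb (norm_nonneg _)
      _ = ‖y ^ (2 * n)‖ := one_mul _
      _ ≤ (t ^ 2) ^ n := hy2
  · exact Metric.mem_ball_self ht0
  · exact summable_asg (by simp)
  · exact hx

lemma as_ode {x : ℝ} (hx : |x| < 1) : (1 - x ^ 2) * asdU x = x * asU x := by
  have hU : HasSum (fun i => asb i * x ^ (2 * i)) (asU x) := (summable_asu hx).hasSum
  have hdU : HasSum (fun i => asb i * ((2 * i) * x ^ (2 * i - 1))) (asdU x) :=
    (summable_dasu hx).hasSum
  set F : ℕ → ℝ := fun i => (2 * i) * asb i * x ^ (2 * i - 1) with hF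
  have h3 : HasSum (fun i =>
      (1 - x ^ 2) * (asb i * ((2 * i) * x ^ (2 * i - 1))) - x * (asb i * x ^ (2 * i)))
      ((1 - x ^ 2) * asdU x - x * asU x) := (hdU.mul_left _).sub (hU.mul_left x)
  have hpt : ∀ i, (1 - x ^ 2) * (asb i * ((2 * i) * x ^ (2 * i - 1))) - x * (asb i * x ^ (2 * i))
      = F i - F (i + 1) := by
    intro i
    have hrec := asb_rec i
    have hFi1 : F (i + 1) = (2 * i + 1) * asb i * x ^ (2 * i + 1) := by
      rw [hF]
      have h1 : 2 * (i + 1) - 1 = 2 * i + 1 := by omega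
      simp only [h1]
      push_cast
      have h2 : 2 * ((i:ℝ) + 1) * asb (i + 1) = (2 * (i:ℝ) + 1) * asb i := by linarith [hrec]
      rw [h2]
    rcases i with _ | m
    · rw [hFi1]; simp [hF]; ring
    · rw [hFi1, hF]
      have h1 : 2 * (m + 1) - 1 = 2 * m + 1 := by omega
      simp only [h1]
      have e1 : x ^ (2 * (m + 1)) = x ^ (2 * m + 1) * x := by
        rw [show 2 * (m + 1) = (2 * m + 1) + 1 from by ring, pow_succ]
      have e2 : x ^ (2 * (m + 1) + 1) = x ^ (2 * m + 1) * x ^ 2 := by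
        rw [show 2 * (m + 1) + 1 = (2 * m + 1) + 2 from by ring, pow_add]
      rw [e1, e2]
      push_cast
      ring
  have h4 : HasSum (fun i => F i - F (i + 1)) ((1 - x ^ 2) * asdU x - x * asU x) :=
    h3.congr_fun (fun i => (hpt i).symm)
  have h5 := h4.tendsto_sum_nat
  have h6 : ∀ n, ∑ i ∈ Finset.range n, (F i - F (i + 1)) = F 0 - F n :=
    fun n => Finset.sum_range_sub' F n
  have hF0 : F 0 = 0 := by simp [hF]
  have hFlim : Tendsto F atTop (𝓝 0) := by
    refine ((summable_dasu hx).tendsto_atTop_zero).congr (fun i => ?_)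
    rw [hF]; ring
  have h7 : Tendsto (fun n => F 0 - F n) atTop (𝓝 0) := by
    have h := Filter.Tendsto.sub (tendsto_const_nhds (x := F 0) (f := atTop)) hFlim
    rw [hF0] at h ⊢
    simpa using h
  have h8 : Tendsto (fun n => ∑ i ∈ Finset.range n, (F i - F (i + 1))) atTop (𝓝 0) := by
    simp only [h6]; exact h7
  have h9 := tendsto_nhds_unique h5 h8
  linarith [h9]

lemma const_of_deriv_zero_ball {t : ℝ} (f : ℝ → ℝ)
    (hf : ∀ y ∈ Metric.ball (0:ℝ) t, HasDerivAt f 0 y) :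
    ∀ x ∈ Metric.ball (0:ℝ) t, f x = f 0 := by
  intro x hx
  have hxt := ball_abs hx
  have ht0 : 0 < t := lt_of_le_of_lt (abs_nonneg x) hxt
  have hx' := abs_lt.mp hxt
  rcases le_or_gt 0 x with h0 | h0
  · have hsub : Set.Icc (0:ℝ) x ⊆ Metric.ball 0 t := by
      intro z hz
      rw [Metric.mem_ball, Real.dist_eq, sub_zero, abs_lt]
      exact ⟨by linarith [hz.1], lt_of_le_of_lt hz.2 hx'.2⟩
    have hcont : ContinuousOn f (Set.Icc 0 x) :=
      fun z hz => ((hf z (hsub hz)).continuousAt).continuousWithinAt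
    exact constant_of_has_deriv_right_zero hcont
      (fun z hz => (hf z (hsub (Set.Ico_subset_Icc_self hz))).hasDerivWithinAt)
      x (Set.right_mem_Icc.mpr h0)
  · have hsub : Set.Icc x (0:ℝ) ⊆ Metric.ball 0 t := by
      intro z hz
      rw [Metric.mem_ball, Real.dist_eq, sub_zero, abs_lt]
      exact ⟨lt_of_lt_of_le hx'.1 hz.1, by linarith [hz.2]⟩
    have hcont : ContinuousOn f (Set.Icc x 0) :=
      fun z hz => ((hf z (hsub hz)).continuousAt).continuousWithinAt
    have := constant_of_has_deriv_right_zero hcont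
      (fun z hz => (hf z (hsub (Set.Ico_subset_Icc_self hz))).hasDerivWithinAt)
      0 (Set.right_mem_Icc.mpr h0.le)
    exact this.symm

lemma asU_zero : asU 0 = 1 := by
  have h : HasSum (fun i => asb i * (0:ℝ) ^ (2 * i)) (asb 0 * (0:ℝ) ^ (2 * 0)) :=
    hasSum_single 0 (fun i hi => by
      rw [zero_pow (by omega), mul_zero])
  have := h.tsum_eq
  rw [asU]
  rw [this]
  simp [asb_zero]

lemma one_le_asU {x : ℝ} (hx : |x| < 1) : 1 ≤ asU x := by
  have hU := (summable_asu hx).hasSum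
  have h := le_hasSum hU 0 (fun i _ => by
    have : (0:ℝ) ≤ x ^ (2 * i) := by rw [pow_mul]; positivity
    exact mul_nonneg (asb_pos i).le this)
  simpa [asb_zero, asU] using h

lemma asU_sq {x : ℝ} (hx : |x| < 1) : asU x ^ 2 * (1 - x ^ 2) = 1 := by
  set t := (|x| + 1) / 2 with htdef
  have ht0 : 0 < t := by positivity
  have ht : t < 1 := by rw [htdef]; linarith
  have hd : ∀ y ∈ Metric.ball (0:ℝ) t, HasDerivAt (fun z => asU z ^ 2 * (1 - z ^ 2)) 0 y := by
    intro y hy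
    have hy1 : |y| < 1 := lt_trans (ball_abs hy) ht
    have hU' := hasDerivAt_asU ht0 ht hy
    have h1 : HasDerivAt (fun z => asU z ^ 2) ((2:ℕ) * asU y ^ (2 - 1) * asdU y) y := hU'.pow 2
    have h2 : HasDerivAt (fun z : ℝ => 1 - z ^ 2) (-((2:ℕ) * y ^ (2 - 1))) y :=
      (hasDerivAt_pow 2 y).const_sub 1
    have h3 := h1.mul h2
    convert h3 using 1
    · rfl
    · rfl
    · rfl
    have hode := as_ode hy1
    push_cast
    linear_combination (-2 * asU y) * hode
  have hmem : x ∈ Metric.ball (0:ℝ) t := by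
    rw [Metric.mem_ball, Real.dist_eq, sub_zero, htdef]; linarith
  have h := const_of_deriv_zero_ball _ hd x hmem
  rw [h, asU_zero]
  norm_num

lemma sqrt_eq_inv_asU {x : ℝ} (hx : |x| < 1) : Real.sqrt (1 - x ^ 2) = (asU x)⁻¹ := by
  have h1 := one_le_asU hx
  have h2 := asU_sq hx
  have hpos : 0 < asU x := by linarith
  have h3 : 1 - x ^ 2 = ((asU x)⁻¹) ^ 2 := by
    field_simp
    nlinarith [h2]
  rw [h3, Real.sqrt_sq (by positivity)]

lemma asG_zero : asG 0 = 0 := by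
  rw [asG]
  convert tsum_zero with i
  rw [zero_pow (by omega), mul_zero]

lemma arcsin_eq_asG {x : ℝ} (hx : |x| < 1) : Real.arcsin x = asG x := by
  set t := (|x| + 1) / 2 with htdef
  have ht0 : 0 < t := by positivity
  have ht : t < 1 := by rw [htdef]; linarith
  have hd : ∀ y ∈ Metric.ball (0:ℝ) t, HasDerivAt (fun z => Real.arcsin z - asG z) 0 y := by
    intro y hy
    have hy1 : |y| < 1 := lt_trans (ball_abs hy) ht
    have hy1' := abs_lt.mp hy1
    have ha := Real.hasDerivAt_arcsin (ne_of_gt hy1'.1) (ne_of_lt hy1'.2)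
    have hg := hasDerivAt_asG ht0 ht hy
    have h := ha.sub hg
    convert h using 1
    · rfl
    · rfl
    · rfl
    rw [sqrt_eq_inv_asU hy1, one_div, inv_inv, sub_self]
  have hmem : x ∈ Metric.ball (0:ℝ) t := by
    rw [Metric.mem_ball, Real.dist_eq, sub_zero, htdef]; linarith
  have h := const_of_deriv_zero_ball _ hd x hmem
  simp only [Real.arcsin_zero, asG_zero, sub_zero, zero_sub] at h
  linarith [h]

lemma hasSum_arcsin_lt {r : ℝ} (hr : |r| < 1) :
    HasSum (fun i => asc i * r ^ (2 * i + 1)) (Real.arcsin r) := by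
  rw [arcsin_eq_asG hr]
  exact (summable_asg hr).hasSum

lemma hasSum_asc_pi : HasSum asc (π / 2) := by
  have hIoo : Set.Ioo (0:ℝ) 1 ∈ 𝓝[<] (1:ℝ) :=
    Ioo_mem_nhdsLT_of_mem (by constructor <;> norm_num)
  have hbound : ∀ N, ∑ i ∈ Finset.range N, asc i ≤ π / 2 := by
    intro N
    have hlim : Tendsto (fun x : ℝ => ∑ i ∈ Finset.range N, asc i * x ^ (2 * i + 1))
        (𝓝[<] (1:ℝ)) (𝓝 (∑ i ∈ Finset.range N, asc i * 1 ^ (2 * i + 1))) :=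
      ((Continuous.tendsto (by continuity) 1)).mono_left nhdsWithin_le_nhds
    have hev : ∀ᶠ x in 𝓝[<] (1:ℝ),
        (∑ i ∈ Finset.range N, asc i * x ^ (2 * i + 1)) ≤ π / 2 := by
      filter_upwards [hIoo] with x hx
      have hx1 : |x| < 1 := by rw [abs_lt]; exact ⟨by linarith [hx.1], hx.2⟩
      have h1 : ∑ i ∈ Finset.range N, asc i * x ^ (2 * i + 1) ≤ Real.arcsin x := by
        apply sum_le_hasSum (Finset.range N) _ (hasSum_arcsin_lt hx1)
        intro i _
        have hx0 : (0:ℝ) ≤ x := by linarith [hx.1]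
        exact mul_nonneg (asc_pos i).le (pow_nonneg hx0 _)
      exact h1.trans (Real.arcsin_le_pi_div_two x)
    have := le_of_tendsto hlim hev
    simpa using this
  have hsummable : Summable asc := summable_of_sum_range_le (fun n => (asc_pos n).le) hbound
  have hL_le : ∑' i, asc i ≤ π / 2 :=
    Real.tsum_le_of_sum_range_le (fun n => (asc_pos n).le) hbound
  have hge : π / 2 ≤ ∑' i, asc i := by
    have hlim : Tendsto Real.arcsin (𝓝[<] (1:ℝ)) (𝓝 (Real.arcsin 1)) :=
      (Real.continuous_arcsin.tendsto 1).mono_left nhdsWithin_le_nhds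
    have hev : ∀ᶠ x in 𝓝[<] (1:ℝ), Real.arcsin x ≤ ∑' i, asc i := by
      filter_upwards [hIoo] with x hx
      have hx1 : |x| < 1 := by rw [abs_lt]; exact ⟨by linarith [hx.1], hx.2⟩
      have hs := hasSum_arcsin_lt hx1
      rw [← hs.tsum_eq]
      apply Summable.tsum_le_tsum _ hs.summable hsummable
      intro i
      have hp : x ^ (2 * i + 1) ≤ 1 := pow_le_one₀ (le_of_lt hx.1) hx.2.le
      calc asc i * x ^ (2 * i + 1) ≤ asc i * 1 :=
            mul_le_mul_of_nonneg_left hp (asc_pos i).le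
        _ = asc i := mul_one _
    have := le_of_tendsto hlim hev
    rwa [Real.arcsin_one] at this
  have hLeq : ∑' i, asc i = π / 2 := le_antisymm hL_le hge
  exact hLeq ▸ hsummable.hasSum

/-- For every real `r` with `|r| ≤ 1`, the arcsine function is
given by the convergent power series
`arcsin r = ∑_{i=0}^∞ ((2i−1)!!/((2i)!!·(2i+1)))·r^(2i+1)`,
where `n!!` is the double factorial (with `0!! = (−1)!! = 1`; note that in `ℕ`
`2·0 − 1 = 0`, so the `i = 0` coefficient is `0!!/(0!!·1) = 1`). -/
theorem arcsin_hasSum_doubleFactorial_series (r : ℝ) (hr : |r| ≤ 1) :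
    HasSum
      (fun i : ℕ =>
        ((Nat.doubleFactorial (2 * i - 1) : ℝ) /
          ((Nat.doubleFactorial (2 * i) : ℝ) * (2 * i + 1))) * r ^ (2 * i + 1))
      (Real.arcsin r) := by
  have hfun : (fun i : ℕ =>
      ((Nat.doubleFactorial (2 * i - 1) : ℝ) /
        ((Nat.doubleFactorial (2 * i) : ℝ) * (2 * i + 1))) * r ^ (2 * i + 1))
      = fun i => asc i * r ^ (2 * i + 1) := by
    funext i
    rw [asc_eq]
  rw [hfun]
  rcases lt_or_eq_of_le hr with h | h
  · exact hasSum_arcsin_lt h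
  · rcases (abs_eq (by norm_num : (0:ℝ) ≤ 1)).mp h with h1 | h1
    · subst h1
      rw [Real.arcsin_one]
      simpa using hasSum_asc_pi
    · subst h1
      rw [Real.arcsin_neg_one]
      have := hasSum_asc_pi.neg
      refine this.congr_fun fun i => ?_
      have hodd : Odd (2 * i + 1) := ⟨i, by ring⟩
      rw [hodd.neg_one_pow]
      ring
end

section
/- Let c ≥ 0, γ ∈ [0, π/2], and let P ∈ ℝ^{m×m} be a matrix with induced ∞-norm ‖P‖∞ ≤ c. If η ∈ ℝ^m satisfies ‖η‖∞ ≤ (c+1)·sin(γ) − c·γ, then for every φ ∈ ℝ^m with ‖φ‖∞ ≤ sin(γ) the vector H_η(φ) = η − P·(arcsin(φ) − φ) satisfies ‖H_η(φ)‖∞ ≤ sin(γ). In other words, H_η maps the closed polydisk D(0, sin γ) = {φ ∈ ℝ^m : ‖φ‖∞ ≤ sin γ} into itself. -/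
open Matrix

/-- Induced `∞`-norm of a square matrix: maximum absolute row sum. -/
noncomputable def matInfNorm {m : ℕ} (P : Matrix (Fin m) (Fin m) ℝ) : ℝ :=
  ⨆ i, ∑ j, |P i j|

lemma arcsin_sub_mono : MonotoneOn (fun x => Real.arcsin x - x) (Set.Icc (-1:ℝ) 1) := by
  intro x hx y hy hxy
  have hx' : Real.sin (Real.arcsin x) = x := Real.sin_arcsin hx.1 hx.2
  have hy' : Real.sin (Real.arcsin y) = y := Real.sin_arcsin hy.1 hy.2
  have h : Real.arcsin x ≤ Real.arcsin y := Real.monotone_arcsin hxy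
  have lip : y - x ≤ Real.arcsin y - Real.arcsin x := by
    have hsin : |Real.sin (Real.arcsin y - Real.arcsin x)| ≤ |Real.arcsin y - Real.arcsin x| :=
      Real.abs_sin_le_abs
    have hss : Real.sin (Real.arcsin y) - Real.sin (Real.arcsin x) =
        2 * Real.sin ((Real.arcsin y - Real.arcsin x) / 2) *
          Real.cos ((Real.arcsin y + Real.arcsin x) / 2) := Real.sin_sub_sin _ _
    have h1 : |Real.sin ((Real.arcsin y - Real.arcsin x) / 2)| ≤
        |(Real.arcsin y - Real.arcsin x) / 2| := Real.abs_sin_le_abs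
    have h2 : |Real.cos ((Real.arcsin y + Real.arcsin x) / 2)| ≤ 1 := Real.abs_cos_le_one _
    have habs : |Real.arcsin y - Real.arcsin x| = Real.arcsin y - Real.arcsin x :=
      abs_of_nonneg (by linarith)
    calc y - x = Real.sin (Real.arcsin y) - Real.sin (Real.arcsin x) := by rw [hx', hy']
      _ ≤ |2 * Real.sin ((Real.arcsin y - Real.arcsin x) / 2) *
          Real.cos ((Real.arcsin y + Real.arcsin x) / 2)| := by rw [← hss]; exact le_abs_self _
      _ ≤ 2 * |(Real.arcsin y - Real.arcsin x) / 2| * 1 := by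
          rw [abs_mul, abs_mul, abs_two]
          gcongr
      _ = |Real.arcsin y - Real.arcsin x| := by rw [abs_div]; simp; ring
      _ = Real.arcsin y - Real.arcsin x := habs
  simp only
  linarith

lemma arcsin_sub_bound {γ x : ℝ} (hγ : γ ∈ Set.Icc 0 (Real.pi / 2))
    (hx : |x| ≤ Real.sin γ) : |Real.arcsin x - x| ≤ γ - Real.sin γ := by
  have hs1 : Real.sin γ ≤ 1 := Real.sin_le_one γ
  have hs0 : 0 ≤ Real.sin γ := Real.sin_nonneg_of_nonneg_of_le_pi hγ.1
    (le_trans hγ.2 (by linarith [Real.pi_pos]))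
  have hxm : -1 ≤ x := le_trans (by linarith [abs_le.mp hx]) (le_refl x)
  have hx1 : x ≤ 1 := le_trans (abs_le.mp hx).2 hs1
  have hxmem : x ∈ Set.Icc (-1:ℝ) 1 := ⟨hxm, hx1⟩
  have hsmem : Real.sin γ ∈ Set.Icc (-1:ℝ) 1 := ⟨by linarith, hs1⟩
  have hnsmem : -Real.sin γ ∈ Set.Icc (-1:ℝ) 1 := ⟨by linarith, by linarith⟩
  have hasg : Real.arcsin (Real.sin γ) = γ :=
    Real.arcsin_sin (by linarith [Real.pi_pos, hγ.1]) hγ.2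
  have h1 := arcsin_sub_mono hxmem hsmem (abs_le.mp hx).2
  have h2 := arcsin_sub_mono hnsmem hxmem (by linarith [abs_le.mp hx])
  simp only at h1 h2
  rw [hasg] at h1
  rw [Real.arcsin_neg, hasg] at h2
  rw [abs_le]
  constructor <;> linarith

/-- Let `c ≥ 0`, `γ ∈ [0, π/2]`, and `P` a matrix with induced
`∞`-norm `‖P‖∞ ≤ c`. If `‖η‖∞ ≤ (c+1)·sin γ − c·γ`, then for every `φ` with
`‖φ‖∞ ≤ sin γ` the vector `H_η(φ) = η − P·(arcsin(φ) − φ)` satisfies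
`‖H_η(φ)‖∞ ≤ sin γ`; i.e. `H_η` maps the polydisk `D(0, sin γ)` into itself. -/
theorem Heta_maps_polydisk_into_itself
    {m : ℕ} (c γ : ℝ) (hc : 0 ≤ c) (hγ : γ ∈ Set.Icc 0 (Real.pi / 2))
    (P : Matrix (Fin m) (Fin m) ℝ) (hP : matInfNorm P ≤ c)
    (η : Fin m → ℝ) (hη : ‖η‖ ≤ (c + 1) * Real.sin γ - c * γ)
    (φ : Fin m → ℝ) (hφ : ‖φ‖ ≤ Real.sin γ) :
    ‖η - P.mulVec (fun i => Real.arcsin (φ i) - φ i)‖ ≤ Real.sin γ := by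
  set v : Fin m → ℝ := fun i => Real.arcsin (φ i) - φ i with hv
  have hsg : Real.sin γ ≤ γ := Real.sin_le hγ.1
  -- bound on v
  have hvb : ∀ i, |v i| ≤ γ - Real.sin γ := by
    intro i
    apply arcsin_sub_bound hγ
    calc |φ i| = ‖φ i‖ := rfl
      _ ≤ ‖φ‖ := norm_le_pi_norm φ i
      _ ≤ Real.sin γ := hφ
  have hvnorm : ‖v‖ ≤ γ - Real.sin γ := by
    apply pi_norm_le_iff_of_nonneg (by linarith) |>.2
    intro i; exact hvb i
  -- bound on P.mulVec v
  have hPv : ‖P.mulVec v‖ ≤ c * (γ - Real.sin γ) := by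
    apply pi_norm_le_iff_of_nonneg (mul_nonneg hc (by linarith)) |>.2
    intro i
    have hrow : ∑ j, |P i j| ≤ c := by
      refine le_trans ?_ hP
      unfold matInfNorm
      exact le_ciSup (f := fun i => ∑ j, |P i j|) (Set.Finite.bddAbove (Set.finite_range _)) i
    calc ‖P.mulVec v i‖ = |∑ j, P i j * v j| := rfl
      _ ≤ ∑ j, |P i j * v j| := Finset.abs_sum_le_sum_abs _ _
      _ ≤ ∑ j, |P i j| * (γ - Real.sin γ) := by
          apply Finset.sum_le_sum
          intro j _
          rw [abs_mul]
          exact mul_le_mul_of_nonneg_left (hvb j) (abs_nonneg _)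
      _ = (∑ j, |P i j|) * (γ - Real.sin γ) := by rw [Finset.sum_mul]
      _ ≤ c * (γ - Real.sin γ) := mul_le_mul_of_nonneg_right hrow (by linarith)
  calc ‖η - P.mulVec v‖ ≤ ‖η‖ + ‖P.mulVec v‖ := norm_sub_le _ _
    _ ≤ ((c + 1) * Real.sin γ - c * γ) + c * (γ - Real.sin γ) := add_le_add hη hPv
    _ = Real.sin γ := by ring
end

section
/- For every φ ∈ ℝ^m with ‖φ‖∞ < 1, the matrix P_cut + P_cyc·diag(1/√(1−φ_i²)) ∈ ℝ^{m×m} is invertible. (This matrix is the derivative at φ of the edge balance map F(φ) = P_cut φ + P_cyc arcsin(φ).) -/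
open Matrix

/-- For every `φ ∈ ℝ^m` with `‖φ‖∞ < 1`, the matrix
`P_cut + P_cyc · diag(1/√(1−φᵢ²))` (the derivative at `φ` of the edge balance map
`F(φ) = P_cut φ + P_cyc arcsin(φ)`) is invertible. -/
theorem edge_balance_map_derivative_invertible
    {n m : ℕ} (hn : 2 ≤ n)
    (B : Matrix (Fin n) (Fin m) ℝ)
    (hB : ∀ e : Fin m, ∃ i j : Fin n, i ≠ j ∧ B i e = 1 ∧ B j e = -1 ∧
      ∀ k : Fin n, k ≠ i → k ≠ j → B k e = 0)
    (hconn : ∀ x : Fin n → ℝ, B.transpose.mulVec x = 0 ↔ ∃ c : ℝ, x = fun _ => c)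
    (a : Fin m → ℝ) (ha : ∀ e, 0 < a e)
    (M : Matrix (Fin n) (Fin n) ℝ)
    (hM1 : (B * Matrix.diagonal a * B.transpose) * M * (B * Matrix.diagonal a * B.transpose)
        = B * Matrix.diagonal a * B.transpose)
    (hM2 : M * (B * Matrix.diagonal a * B.transpose) * M = M)
    (hM3 : (M * (B * Matrix.diagonal a * B.transpose))ᵀ = M * (B * Matrix.diagonal a * B.transpose))
    (hM4 : ((B * Matrix.diagonal a * B.transpose) * M)ᵀ = (B * Matrix.diagonal a * B.transpose) * M)
    (φ : Fin m → ℝ) (hφ : ‖φ‖ < 1) :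
    let Pcut : Matrix (Fin m) (Fin m) ℝ := B.transpose * M * (B * Matrix.diagonal a)
    let Pcyc : Matrix (Fin m) (Fin m) ℝ := 1 - Pcut
    IsUnit (Pcut + Pcyc * Matrix.diagonal (fun i => 1 / Real.sqrt (1 - φ i ^ 2))) := by
  intro Pcut Pcyc
  have hPcut : Pcut = B.transpose * M * (B * Matrix.diagonal a) := rfl
  have hPcyc : Pcyc = 1 - Pcut := rfl
  clear_value Pcyc Pcut
  set A' : Matrix (Fin m) (Fin m) ℝ := Matrix.diagonal a with hA'
  set L : Matrix (Fin n) (Fin n) ℝ := B * A' * B.transpose with hLdef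
  have hLsymm : Lᵀ = L := by
    rw [hLdef, Matrix.transpose_mul, Matrix.transpose_mul, Matrix.transpose_transpose,
      hA', Matrix.diagonal_transpose, Matrix.mul_assoc]
  -- symmetry of M
  have h1 : M * L = L * Mᵀ := by
    conv_lhs => rw [← hM3]
    rw [Matrix.transpose_mul, hLsymm]
  have h2 : L * M = Mᵀ * L := by
    conv_lhs => rw [← hM4]
    rw [Matrix.transpose_mul, hLsymm]
  have hS : M * Mᵀ * L = M := by
    calc M * Mᵀ * L = M * (Mᵀ * L) := Matrix.mul_assoc _ _ _
      _ = M * (L * M) := by rw [← h2]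
      _ = M := by rw [← Matrix.mul_assoc, hM2]
  have key : M = M * L * Mᵀ := by
    calc M = M * Mᵀ * L := hS.symm
      _ = M * Mᵀ * (L * M * L) := by rw [hM1]
      _ = (M * Mᵀ * L) * (M * L) := by simp only [Matrix.mul_assoc]
      _ = M * (M * L) := by rw [hS]
      _ = M * (L * Mᵀ) := by rw [h1]
      _ = M * L * Mᵀ := (Matrix.mul_assoc _ _ _).symm
  have hMsymm : Mᵀ = M := by
    calc Mᵀ = (M * L * Mᵀ)ᵀ := by rw [← key]
      _ = M * Lᵀ * Mᵀ := by
          rw [Matrix.transpose_mul, Matrix.transpose_mul, Matrix.transpose_transpose,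
            Matrix.mul_assoc]
      _ = M := by rw [hLsymm, ← key]
  -- Pcut is idempotent
  have hPP : Pcut * Pcut = Pcut := by
    rw [hPcut]
    calc B.transpose * M * (B * A') * (B.transpose * M * (B * A'))
        = B.transpose * (M * (B * A' * B.transpose) * M) * (B * A') := by
          simp only [Matrix.mul_assoc]
      _ = B.transpose * M * (B * A') := by rw [← hLdef, hM2, Matrix.mul_assoc]
  -- transpose relation
  have hPA : Pcutᵀ * A' = A' * Pcut := by
    rw [hPcut]
    rw [Matrix.transpose_mul, Matrix.transpose_mul, Matrix.transpose_mul,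
      Matrix.transpose_transpose, hMsymm, hA', Matrix.diagonal_transpose]
    simp only [Matrix.mul_assoc]
  set d : Fin m → ℝ := fun i => 1 / Real.sqrt (1 - φ i ^ 2) with hd
  have hdpos : ∀ i, 0 < d i := by
    intro i
    have hφi : |φ i| < 1 := by
      have := norm_le_pi_norm φ i
      simp only [Real.norm_eq_abs] at this
      linarith
    have h12 : 0 < 1 - φ i ^ 2 := by nlinarith [abs_nonneg (φ i), sq_abs (φ i)]
    simp only [hd, one_div, inv_pos]
    exact Real.sqrt_pos.mpr h12
  set T : Matrix (Fin m) (Fin m) ℝ := Pcut + Pcyc * Matrix.diagonal d with hT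
  have hdet : T.det ≠ 0 := by
    intro h0
    obtain ⟨v, hv0, hv⟩ := (Matrix.exists_mulVec_eq_zero_iff).mpr h0
    apply hv0
    have h6 : Pcut * (1 - Pcut) = 0 := by
      rw [Matrix.mul_sub, Matrix.mul_one, hPP, sub_self]
    have h5 : Pcut * T = Pcut := by
      calc Pcut * T = Pcut * Pcut + Pcut * ((1 - Pcut) * Matrix.diagonal d) := by
            rw [hT, hPcyc, Matrix.mul_add]
        _ = Pcut * Pcut + (Pcut * (1 - Pcut)) * Matrix.diagonal d := by
            rw [Matrix.mul_assoc Pcut (1 - Pcut) (Matrix.diagonal d)]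
        _ = Pcut := by rw [hPP, h6, Matrix.zero_mul, add_zero]
    have hPv : Pcut.mulVec v = 0 := by
      calc Pcut.mulVec v = (Pcut * T).mulVec v := by rw [h5]
        _ = Pcut.mulVec (T.mulVec v) := (Matrix.mulVec_mulVec v Pcut T).symm
        _ = 0 := by rw [hv, Matrix.mulVec_zero]
    set w : Fin m → ℝ := (Matrix.diagonal d).mulVec v with hwdef
    have hw : Pcut.mulVec w = w := by
      have hkey : Pcut.mulVec v + (w - Pcut.mulVec w) = 0 := by
        calc Pcut.mulVec v + (w - Pcut.mulVec w)
            = T.mulVec v := by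
              rw [hT, Matrix.add_mulVec]
              congr 1
              rw [hPcyc, ← Matrix.mulVec_mulVec, ← hwdef, Matrix.sub_mulVec, Matrix.one_mulVec]
          _ = 0 := hv
      rw [hPv, zero_add, sub_eq_zero] at hkey
      exact hkey.symm
    have ht : (A'.mulVec v) ⬝ᵥ w = 0 := by
      calc (A'.mulVec v) ⬝ᵥ w = (A'.mulVec v) ⬝ᵥ (Pcut.mulVec w) := by rw [hw]
        _ = ((A'.mulVec v) ᵥ* Pcut) ⬝ᵥ w := Matrix.dotProduct_mulVec _ _ _
        _ = (Pcutᵀ.mulVec (A'.mulVec v)) ⬝ᵥ w := by rw [Matrix.mulVec_transpose]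
        _ = ((Pcutᵀ * A').mulVec v) ⬝ᵥ w := by rw [Matrix.mulVec_mulVec]
        _ = ((A' * Pcut).mulVec v) ⬝ᵥ w := by rw [hPA]
        _ = (A'.mulVec (Pcut.mulVec v)) ⬝ᵥ w := by rw [← Matrix.mulVec_mulVec]
        _ = 0 := by rw [hPv, Matrix.mulVec_zero, zero_dotProduct]
    have hsum : ∑ i, (a i * v i) * (d i * v i) = 0 := by
      rw [← ht]
      simp only [dotProduct, hwdef, hA', Matrix.mulVec_diagonal]
    have hterm : ∀ i ∈ Finset.univ, (0:ℝ) ≤ (a i * v i) * (d i * v i) := by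
      intro i _
      have hr : (a i * v i) * (d i * v i) = (a i * d i) * (v i)^2 := by ring
      rw [hr]
      exact mul_nonneg (mul_nonneg (ha i).le (hdpos i).le) (sq_nonneg _)
    have hzero := (Finset.sum_eq_zero_iff_of_nonneg hterm).mp hsum
    funext i
    have hi := hzero i (Finset.mem_univ i)
    have hprod : (a i * d i) * (v i)^2 = 0 := by linear_combination hi
    have hne : a i * d i ≠ 0 := ne_of_gt (mul_pos (ha i) (hdpos i))
    have hv2 : (v i)^2 = 0 := by
      rcases mul_eq_zero.mp hprod with h | h
      · exact absurd h hne
      · exact h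
    have : v i = 0 := by
      have := sq_eq_zero_iff.mp hv2
      exact this
    simpa using this
  exact (Matrix.isUnit_iff_isUnit_det T).mpr (isUnit_iff_ne_zero.mpr hdet)
end

section
/- Let ω ∈ ℝⁿ with 1_nᵀω = 0 satisfy the synchronization test ‖BᵀL†ω‖∞ < h(‖P_cyc‖∞); let y ≥ 0 be the unique number with h(y) = ‖BᵀL†ω‖∞ and set γ* = arccos(y/(y+1)) ∈ [0, π/2). Then there exists a unique x* ∈ ℝⁿ with 1_nᵀx* = 0 and ‖Bᵀx*‖∞ ≤ γ* satisfying the synchronization equation ω = B𝒜 sin(Bᵀx*). -/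
open Matrix Filter Topology

lemma hfun_eq_sin (x : ℝ) :
    hfun x = (x + 1) * Real.sin (Real.arccos (x / (x + 1))) - x * Real.arccos (x / (x + 1)) := by
  rw [hfun, Real.sin_arccos]

lemma udiv_mem {x : ℝ} (hx : 0 ≤ x) : 0 ≤ x / (x + 1) ∧ x / (x + 1) < 1 := by
  constructor
  · positivity
  · rw [div_lt_one (by linarith)]; linarith

lemma hfun_hasDeriv {x : ℝ} (hx : 0 < x) :
    HasDerivAt hfun (Real.sin (Real.arccos (x / (x+1))) - Real.arccos (x / (x+1))) x := by
  have hx1 : x + 1 ≠ 0 := by positivity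
  obtain ⟨hu0, hu1⟩ := udiv_mem hx.le
  set u := x / (x + 1) with hu
  have hu' : HasDerivAt (fun t : ℝ => t / (t + 1)) (1 / (x+1)^2) x := by
    have h1 : HasDerivAt (fun t : ℝ => t) 1 x := hasDerivAt_id x
    have h2 : HasDerivAt (fun t : ℝ => t + 1) 1 x := h1.add_const 1
    have := h1.div h2 hx1
    refine this.congr_deriv ?_
    ring
  have hne1 : u ≠ 1 := ne_of_lt hu1
  have hnem1 : u ≠ -1 := by intro h; rw [h] at hu0; linarith
  have hsq : (0:ℝ) < 1 - u ^ 2 := by nlinarith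
  have harc : HasDerivAt (fun t : ℝ => Real.arccos (t / (t+1)))
      (-(1 / Real.sqrt (1 - u ^ 2)) * (1 / (x+1)^2)) x :=
    by have := (Real.hasDerivAt_arccos hnem1 hne1).comp x hu'; exact this
  have hsqrt : HasDerivAt (fun t : ℝ => Real.sqrt (1 - (t / (t+1)) ^ 2))
      (1 / (2 * Real.sqrt (1 - u ^ 2)) * (-(2 * u) * (1 / (x+1)^2))) x := by
    have hinner : HasDerivAt (fun t : ℝ => 1 - (t / (t+1)) ^ 2) (-(2*u) * (1/(x+1)^2)) x := by
      have := ((hu'.pow 2).const_sub 1)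
      refine this.congr_deriv ?_
      ring
    exact (Real.hasDerivAt_sqrt (ne_of_gt hsq)).comp x hinner
  have h1 : HasDerivAt (fun t : ℝ => (t + 1) * Real.sqrt (1 - (t / (t+1)) ^ 2))
      (1 * Real.sqrt (1 - u ^ 2) + (x+1) * (1 / (2 * Real.sqrt (1 - u ^ 2)) * (-(2 * u) * (1 / (x+1)^2)))) x :=
    ((hasDerivAt_id x).add_const 1).mul hsqrt
  have h2 : HasDerivAt (fun t : ℝ => t * Real.arccos (t / (t+1)))
      (1 * Real.arccos u + x * (-(1 / Real.sqrt (1 - u ^ 2)) * (1 / (x+1)^2))) x :=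
    (hasDerivAt_id x).mul harc
  have := h1.sub h2
  refine this.congr_deriv ?_
  rw [Real.sin_arccos]
  have hs : Real.sqrt (1 - u^2) > 0 := Real.sqrt_pos.2 hsq
  have hux : (x+1) * u = x := by rw [hu]; field_simp
  have hrw : 1 * Real.sqrt (1 - u ^ 2) + (x+1) * (1 / (2 * Real.sqrt (1 - u ^ 2)) * (-(2 * u) * (1 / (x+1)^2)))
      - (1 * Real.arccos u + x * (-(1 / Real.sqrt (1 - u ^ 2)) * (1 / (x+1)^2)))
      = Real.sqrt (1 - u^2) - Real.arccos u + (x - (x+1)*u) / (Real.sqrt (1 - u^2) * (x+1)^2) := by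
    field_simp
    ring
  rw [hrw, hux, sub_self, zero_div, add_zero]

lemma hfun_strictAntiOn : StrictAntiOn hfun (Set.Ici (0:ℝ)) := by
  apply strictAntiOn_of_deriv_neg (convex_Ici 0)
  · apply ContinuousOn.sub
    · apply ContinuousOn.mul
      · fun_prop
      · apply Real.continuous_sqrt.comp_continuousOn
        apply ContinuousOn.sub continuousOn_const
        apply ContinuousOn.pow
        apply ContinuousOn.div continuousOn_id (by fun_prop)
        intro x hx; simp at hx; intro h; linarith
    · apply ContinuousOn.mul continuousOn_id
      apply Real.continuous_arccos.comp_continuousOn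
      apply ContinuousOn.div continuousOn_id (by fun_prop)
      intro x hx; simp at hx; intro h; linarith
  · intro x hx
    rw [interior_Ici] at hx
    have hx' : 0 < x := hx
    rw [(hfun_hasDeriv hx').deriv]
    obtain ⟨hu0, hu1⟩ := udiv_mem hx'.le
    have harcpos : 0 < Real.arccos (x / (x+1)) := Real.arccos_pos.2 hu1
    have := Real.sin_lt harcpos
    linarith

-- g(t) = t - sin t is monotone
lemma g_mono : Monotone (fun t : ℝ => t - Real.sin t) := by
  have hd : ∀ t : ℝ, HasDerivAt (fun t : ℝ => t - Real.sin t) (1 - Real.cos t) t :=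
    fun t => (hasDerivAt_id t).sub (Real.hasDerivAt_sin t)
  apply monotone_of_deriv_nonneg
  · exact fun t => ((hd t).differentiableAt)
  · intro t
    rw [(hd t).deriv]
    have := Real.cos_le_one t
    linarith

lemma g_bound {γ t : ℝ} (hγ : 0 ≤ γ) (ht : |t| ≤ γ) :
    |t - Real.sin t| ≤ γ - Real.sin γ := by
  rcases le_or_gt 0 t with h | h
  · have h1 : t - Real.sin t ≤ γ - Real.sin γ := g_mono (by rw [abs_of_nonneg h] at ht; exact ht)
    have h2 : 0 ≤ t - Real.sin t := by
      have := g_mono h; simpa using this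
    rw [abs_of_nonneg h2]; exact h1
  · have ht' : -γ ≤ t := by rw [abs_of_neg h] at ht; linarith
    have h1 : -γ - Real.sin (-γ) ≤ t - Real.sin t := g_mono ht'
    rw [Real.sin_neg] at h1
    have h2 : t - Real.sin t ≤ 0 := by
      have := g_mono h.le; simpa using this
    rw [abs_of_nonpos h2]; linarith

lemma g_lip {γ s t : ℝ} (hγ : 0 ≤ γ) (hγ2 : γ ≤ Real.pi) (hs : |s| ≤ γ) (ht : |t| ≤ γ) :
    |(s - Real.sin s) - (t - Real.sin t)| ≤ (1 - Real.cos γ) * |s - t| := by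
  have hconv : Convex ℝ (Set.Icc (-γ) γ) := convex_Icc _ _
  have hK : 0 ≤ 1 - Real.cos γ := by have := Real.cos_le_one γ; linarith
  have hlip : LipschitzOnWith (1 - Real.cos γ).toNNReal (fun t : ℝ => t - Real.sin t)
      (Set.Icc (-γ) γ) := by
    apply hconv.lipschitzOnWith_of_nnnorm_deriv_le
      (fun x _ => ((hasDerivAt_id x).sub (Real.hasDerivAt_sin x)).differentiableAt)
    intro x hx
    rw [((hasDerivAt_id x).sub (Real.hasDerivAt_sin x)).deriv]
    rw [← NNReal.coe_le_coe, coe_nnnorm, Real.coe_toNNReal _ hK, Real.norm_eq_abs]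
    have hcos : Real.cos γ ≤ Real.cos x := by
      rw [← Real.cos_abs x]
      apply Real.cos_le_cos_of_nonneg_of_le_pi (abs_nonneg x) hγ2
      rw [abs_le]; exact hx
    have := Real.cos_le_one x
    rw [abs_of_nonneg (by linarith)]
    linarith
  have := hlip.dist_le_mul s (abs_le.1 hs) t (abs_le.1 ht)
  rw [Real.dist_eq, Real.dist_eq, Real.coe_toNNReal _ hK] at this
  exact this

section MatrixLemmas
variable {n m : ℕ} (B : Matrix (Fin n) (Fin m) ℝ) (a : Fin m → ℝ)

lemma colsum (hB : ∀ e : Fin m, ∃ i j : Fin n, i ≠ j ∧ B i e = 1 ∧ B j e = -1 ∧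
      ∀ k : Fin n, k ≠ i → k ≠ j → B k e = 0) (e : Fin m) : ∑ i, B i e = 0 := by
  obtain ⟨i, j, hij, hi, hj, hz⟩ := hB e
  have : ∀ k : Fin n, B k e = (if k = i then 1 else if k = j then (-1:ℝ) else 0) := by
    intro k
    by_cases h1 : k = i
    · simp [h1, hi]
    · by_cases h2 : k = j
      · simp [h1, h2, hj, Ne.symm hij]
      · simp [h1, h2, hz k h1 h2]
  rw [Finset.sum_congr rfl (fun k _ => this k)]
  have this2 : ∀ k : Fin n, (if k = i then (1:ℝ) else if k = j then -1 else 0)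
      = (if k = i then (1:ℝ) else 0) + (if k = j then (-1:ℝ) else 0) := by
    intro k
    by_cases h1 : k = i
    · subst h1; simp [hij]
    · by_cases h2 : k = j <;> simp [h1, h2, Ne.symm hij]
  rw [Finset.sum_congr rfl (fun k _ => this2 k), Finset.sum_add_distrib]
  simp

lemma sum_B_mulVec (hB : ∀ e : Fin m, ∃ i j : Fin n, i ≠ j ∧ B i e = 1 ∧ B j e = -1 ∧
      ∀ k : Fin n, k ≠ i → k ≠ j → B k e = 0) (v : Fin m → ℝ) :
    ∑ i, B.mulVec v i = 0 := by
  simp only [Matrix.mulVec, dotProduct]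
  rw [Finset.sum_comm]
  apply Finset.sum_eq_zero
  intro e _
  rw [← Finset.sum_mul, colsum B hB e, zero_mul]

lemma BT_mulVec_const (hB : ∀ e : Fin m, ∃ i j : Fin n, i ≠ j ∧ B i e = 1 ∧ B j e = -1 ∧
      ∀ k : Fin n, k ≠ i → k ≠ j → B k e = 0) (c : ℝ) :
    B.transpose.mulVec (fun _ => c) = 0 := by
  funext e
  simp only [Matrix.mulVec, dotProduct, Matrix.transpose_apply]
  rw [← Finset.sum_mul, colsum B hB e, zero_mul]
  rfl

lemma quad_zero (ha : ∀ e, 0 < a e) (v : Fin n → ℝ)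
    (hv : (B * Matrix.diagonal a * B.transpose).mulVec v = 0) :
    B.transpose.mulVec v = 0 := by
  have h0 : v ⬝ᵥ (B * Matrix.diagonal a * B.transpose).mulVec v = 0 := by
    rw [hv]; simp
  set w := B.transpose.mulVec v with hw
  have key : v ⬝ᵥ (B * Matrix.diagonal a * B.transpose).mulVec v = ∑ e, a e * w e ^ 2 := by
    rw [← Matrix.mulVec_mulVec, ← Matrix.mulVec_mulVec]
    rw [Matrix.dotProduct_mulVec v B]
    have hvB : v ᵥ* B = w := by
      rw [hw, ← Matrix.vecMul_transpose, Matrix.transpose_transpose]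
    rw [hvB]
    simp only [dotProduct]
    apply Finset.sum_congr rfl
    intro e _
    rw [Matrix.mulVec_diagonal]
    ring
  rw [key] at h0
  funext e
  have hnn : ∀ e ∈ Finset.univ, 0 ≤ a e * w e ^ 2 := fun e _ => mul_nonneg (ha e).le (sq_nonneg _)
  have := (Finset.sum_eq_zero_iff_of_nonneg hnn).1 h0 e (Finset.mem_univ e)
  have hae := ha e
  have : w e ^ 2 = 0 := by
    rcases mul_eq_zero.1 this with h | h
    · exact absurd h (ne_of_gt hae)
    · exact h
  simpa [hw] using pow_eq_zero_iff (n := 2) (by norm_num) |>.1 this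

lemma F2 (ha : ∀ e, 0 < a e) (M : Matrix (Fin n) (Fin n) ℝ)
    (hM1 : (B * Matrix.diagonal a * B.transpose) * M * (B * Matrix.diagonal a * B.transpose)
        = B * Matrix.diagonal a * B.transpose) (x : Fin n → ℝ) :
    B.transpose.mulVec (M.mulVec ((B * Matrix.diagonal a * B.transpose).mulVec x))
      = B.transpose.mulVec x := by
  set L := B * Matrix.diagonal a * B.transpose with hL
  have h1 : L.mulVec (M.mulVec (L.mulVec x) - x) = 0 := by
    rw [Matrix.mulVec_sub, Matrix.mulVec_mulVec, Matrix.mulVec_mulVec, hM1, sub_self]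
  have h2 := quad_zero B a ha _ h1
  rw [Matrix.mulVec_sub] at h2
  have := sub_eq_zero.1 h2
  exact this

lemma F1 (hn : 2 ≤ n)
    (hB : ∀ e : Fin m, ∃ i j : Fin n, i ≠ j ∧ B i e = 1 ∧ B j e = -1 ∧
      ∀ k : Fin n, k ≠ i → k ≠ j → B k e = 0)
    (hconn : ∀ x : Fin n → ℝ, B.transpose.mulVec x = 0 ↔ ∃ c : ℝ, x = fun _ => c)
    (ha : ∀ e, 0 < a e) (M : Matrix (Fin n) (Fin n) ℝ)
    (hM1 : (B * Matrix.diagonal a * B.transpose) * M * (B * Matrix.diagonal a * B.transpose)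
        = B * Matrix.diagonal a * B.transpose)
    (w : Fin n → ℝ) (hw : ∑ i, w i = 0) :
    (B * Matrix.diagonal a * B.transpose).mulVec (M.mulVec w) = w := by
  set L := B * Matrix.diagonal a * B.transpose with hL
  -- the sum functional
  let φ : (Fin n → ℝ) →ₗ[ℝ] ℝ :=
    { toFun := fun x => ∑ i, x i
      map_add' := fun x y => by simp [Finset.sum_add_distrib]
      map_smul' := fun c x => by simp [Finset.mul_sum] }
  set U := LinearMap.ker φ with hU
  have hmaps : ∀ x ∈ U, L.mulVecLin x ∈ U := by
    intro x hx
    refine LinearMap.mem_ker.2 ?_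
    show ∑ i, L.mulVec x i = 0
    have hrw : L.mulVec x = B.mulVec ((Matrix.diagonal a * B.transpose).mulVec x) := by
      rw [hL, Matrix.mul_assoc, ← Matrix.mulVec_mulVec]
    rw [hrw]
    exact sum_B_mulVec B hB _
  let e : U →ₗ[ℝ] U := (L.mulVecLin).restrict hmaps
  have hinj : Function.Injective e := by
    rw [← LinearMap.ker_eq_bot, LinearMap.ker_eq_bot']
    intro z hz
    have hz' : L.mulVec z.1 = 0 := by
      have := congrArg Subtype.val hz
      simpa [e, LinearMap.restrict_apply] using this
    have hBz := quad_zero B a ha _ hz'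
    obtain ⟨c, hc⟩ := (hconn z.1).1 hBz
    have hsum : ∑ i, z.1 i = 0 := z.2
    rw [hc] at hsum
    simp only [Finset.sum_const, Finset.card_univ, Fintype.card_fin, nsmul_eq_mul] at hsum
    have hn0 : (n:ℝ) ≠ 0 := by positivity
    have hc0 : c = 0 := by
      rcases mul_eq_zero.1 hsum with h | h
      · exact absurd h hn0
      · exact h
    apply Subtype.ext
    rw [hc, hc0]
    rfl
  have hsurj : Function.Surjective e := by
    rwa [← LinearMap.injective_iff_surjective]
  obtain ⟨z, hz⟩ := hsurj ⟨w, hw⟩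
  have hz' : L.mulVec z.1 = w := by
    have := congrArg Subtype.val hz
    simpa [e, LinearMap.restrict_apply] using this
  calc L.mulVec (M.mulVec w) = L.mulVec (M.mulVec (L.mulVec z.1)) := by rw [hz']
    _ = (L * M * L).mulVec z.1 := by
        rw [Matrix.mulVec_mulVec, Matrix.mulVec_mulVec, Matrix.mul_assoc, Matrix.mul_assoc]
    _ = L.mulVec z.1 := by rw [hL, hM1]
    _ = w := hz'

end MatrixLemmas


lemma rowsum_le_matInfNorm {m : ℕ} (P : Matrix (Fin m) (Fin m) ℝ) (i : Fin m) :
    ∑ j, |P i j| ≤ matInfNorm P := by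
  rw [matInfNorm]
  exact le_ciSup (Set.Finite.bddAbove (Set.finite_range fun i => ∑ j, |P i j|)) i

lemma matInfNorm_nonneg {m : ℕ} [Nonempty (Fin m)] (P : Matrix (Fin m) (Fin m) ℝ) :
    0 ≤ matInfNorm P :=
  le_trans (Finset.sum_nonneg fun j _ => abs_nonneg _)
    (rowsum_le_matInfNorm P (Classical.arbitrary _))

lemma mulVec_infNorm_le {m : ℕ} [Nonempty (Fin m)] (P : Matrix (Fin m) (Fin m) ℝ)
    (v : Fin m → ℝ) : ‖P.mulVec v‖ ≤ matInfNorm P * ‖v‖ := by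
  rw [pi_norm_le_iff_of_nonneg (mul_nonneg (matInfNorm_nonneg P) (norm_nonneg v))]
  intro i
  rw [Real.norm_eq_abs]
  simp only [Matrix.mulVec, dotProduct]
  calc |∑ j, P i j * v j| ≤ ∑ j, |P i j * v j| := Finset.abs_sum_le_sum_abs _ _
    _ = ∑ j, |P i j| * |v j| := by simp [abs_mul]
    _ ≤ ∑ j, |P i j| * ‖v‖ := by
        apply Finset.sum_le_sum
        intro j _
        exact mul_le_mul_of_nonneg_left (by simpa using norm_le_pi_norm v j) (abs_nonneg _)
    _ = (∑ j, |P i j|) * ‖v‖ := by rw [Finset.sum_mul]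
    _ ≤ matInfNorm P * ‖v‖ := mul_le_mul_of_nonneg_right (rowsum_le_matInfNorm P i) (norm_nonneg v)

/-- Let `ω ⊥ 1ₙ` satisfy the synchronization test
`‖BᵀL†ω‖∞ < h(‖P_cyc‖∞)`; let `y = h⁻¹(‖BᵀL†ω‖∞)` and `γ* = arccos(y/(y+1)) ∈ [0, π/2)`.
Then there exists a unique `x* ⊥ 1ₙ` with `‖Bᵀx*‖∞ ≤ γ*` satisfying the
synchronization equation `ω = B𝒜 sin(Bᵀx*)`. -/
theorem sync_manifold_existence_uniqueness
    {n m : ℕ} (hn : 2 ≤ n)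
    (B : Matrix (Fin n) (Fin m) ℝ)
    (hB : ∀ e : Fin m, ∃ i j : Fin n, i ≠ j ∧ B i e = 1 ∧ B j e = -1 ∧
      ∀ k : Fin n, k ≠ i → k ≠ j → B k e = 0)
    (hconn : ∀ x : Fin n → ℝ, B.transpose.mulVec x = 0 ↔ ∃ c : ℝ, x = fun _ => c)
    (a : Fin m → ℝ) (ha : ∀ e, 0 < a e)
    (M : Matrix (Fin n) (Fin n) ℝ)
    (hM1 : (B * Matrix.diagonal a * B.transpose) * M * (B * Matrix.diagonal a * B.transpose)
        = B * Matrix.diagonal a * B.transpose)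
    (hM2 : M * (B * Matrix.diagonal a * B.transpose) * M = M)
    (hM3 : (M * (B * Matrix.diagonal a * B.transpose))ᵀ = M * (B * Matrix.diagonal a * B.transpose))
    (hM4 : ((B * Matrix.diagonal a * B.transpose) * M)ᵀ = (B * Matrix.diagonal a * B.transpose) * M)
    (ω : Fin n → ℝ) (hω : ∑ i, ω i = 0)
    (y : ℝ) (hy0 : 0 ≤ y) :
    let Pcut : Matrix (Fin m) (Fin m) ℝ := B.transpose * M * (B * Matrix.diagonal a)
    let Pcyc : Matrix (Fin m) (Fin m) ℝ := 1 - Pcut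
    ‖B.transpose.mulVec (M.mulVec ω)‖ < hfun (matInfNorm Pcyc) →
    hfun y = ‖B.transpose.mulVec (M.mulVec ω)‖ →
    Real.arccos (y / (y + 1)) ∈ Set.Ico 0 (Real.pi / 2) ∧
    ∃! xstar : Fin n → ℝ,
      (∑ i, xstar i = 0) ∧
      ‖B.transpose.mulVec xstar‖ ≤ Real.arccos (y / (y + 1)) ∧
      ω = (B * Matrix.diagonal a).mulVec (fun e => Real.sin (B.transpose.mulVec xstar e)) := by
  intro Pcut Pcyc htest heq
  -- Fin m is nonempty
  have hmne : Nonempty (Fin m) := by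
    by_contra h
    have hempty : IsEmpty (Fin m) := not_nonempty_iff.1 h
    set x : Fin n → ℝ := fun i => if i = ⟨0, by omega⟩ then 1 else 0 with hx
    have hx0 : B.transpose.mulVec x = 0 := funext fun e => hempty.elim e
    obtain ⟨c, hc⟩ := (hconn x).1 hx0
    have h1 : x ⟨0, by omega⟩ = c := by rw [hc]
    have h2 : x ⟨1, by omega⟩ = c := by rw [hc]
    have hne : (⟨1, by omega⟩ : Fin n) ≠ ⟨0, by omega⟩ := by
      intro hh
      have := congrArg Fin.val hh
      simp at this
    rw [hx] at h1 h2
    simp only [if_pos rfl] at h1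
    simp only [if_neg hne] at h2
    rw [← h1] at h2
    norm_num at h2
  set ρ := matInfNorm Pcyc with hρ
  set c := ‖B.transpose.mulVec (M.mulVec ω)‖ with hc
  set γ := Real.arccos (y / (y + 1)) with hγ
  have hρ0 : 0 ≤ ρ := matInfNorm_nonneg Pcyc
  -- ρ < y
  have hρy : ρ < y := by
    by_contra hle
    push_neg at hle
    rcases lt_or_eq_of_le hle with hlt | heqq
    · have := hfun_strictAntiOn hy0 (Set.mem_Ici.2 hρ0) hlt
      rw [heq] at this
      exact absurd htest (not_lt.2 this.le)
    · rw [← heqq, ← heq] at htest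
      exact lt_irrefl _ htest
  have hy' : 0 < y := lt_of_le_of_lt hρ0 hρy
  have hy1 : (0:ℝ) < y + 1 := by linarith
  have hu0 : 0 < y / (y + 1) := by positivity
  have hu1 : y / (y + 1) < 1 := by rw [div_lt_one hy1]; linarith
  have hγ0 : 0 < γ := Real.arccos_pos.2 hu1
  have hγpi2 : γ < Real.pi / 2 := Real.arccos_lt_pi_div_two.2 hu0
  have hγpi : γ ≤ Real.pi := by
    have := Real.pi_pos
    linarith
  have hcos : Real.cos γ = y / (y + 1) := Real.cos_arccos (by linarith) hu1.le
  have hsinle : Real.sin γ ≤ γ := Real.sin_le hγ0.le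
  have hcval : c = (y + 1) * Real.sin γ - y * γ := by
    rw [← heq, hfun_eq_sin]
  have hgγ0 : 0 ≤ γ - Real.sin γ := by linarith
  have hc0 : 0 ≤ c := norm_nonneg _
  have part1 : γ ∈ Set.Ico 0 (Real.pi / 2) := ⟨Real.arccos_nonneg _, hγpi2⟩
  refine ⟨part1, ?_⟩
  -- the fixed point map
  set T : (Fin m → ℝ) → (Fin m → ℝ) :=
    fun ψ => Pcut.mulVec (ψ - fun e => Real.sin (ψ e)) + B.transpose.mulVec (M.mulVec ω)
    with hT
  have hPcutv : ∀ w : Fin m → ℝ, ‖Pcut.mulVec w‖ ≤ (1 + ρ) * ‖w‖ := by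
    intro w
    have h1 : Pcut.mulVec w = w - Pcyc.mulVec w := by
      have : Pcut = 1 - Pcyc := by simp [Pcyc]
      rw [this, Matrix.sub_mulVec, Matrix.one_mulVec]
    rw [h1]
    calc ‖w - Pcyc.mulVec w‖ ≤ ‖w‖ + ‖Pcyc.mulVec w‖ := norm_sub_le _ _
      _ ≤ ‖w‖ + ρ * ‖w‖ := by
          have := mulVec_infNorm_le Pcyc w
          linarith
      _ = (1 + ρ) * ‖w‖ := by ring
  -- invariance
  have hinv : ∀ ψ : Fin m → ℝ, ‖ψ‖ ≤ γ → ‖T ψ‖ ≤ γ := by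
    intro ψ hψ
    have hg : ‖ψ - fun e => Real.sin (ψ e)‖ ≤ γ - Real.sin γ := by
      rw [pi_norm_le_iff_of_nonneg hgγ0]
      intro e
      have he : |ψ e| ≤ γ := le_trans (by simpa using norm_le_pi_norm ψ e) hψ
      simpa using g_bound hγ0.le he
    calc ‖T ψ‖ ≤ ‖Pcut.mulVec (ψ - fun e => Real.sin (ψ e))‖ + c := norm_add_le _ _
      _ ≤ (1 + ρ) * (γ - Real.sin γ) + c := by
          have h2 := hPcutv (ψ - fun e => Real.sin (ψ e))
          have h3 : (1 + ρ) * ‖ψ - fun e => Real.sin (ψ e)‖ ≤ (1 + ρ) * (γ - Real.sin γ) :=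
            mul_le_mul_of_nonneg_left hg (by linarith)
          linarith
      _ ≤ γ := by
          rw [hcval]
          nlinarith [mul_nonneg (sub_nonneg.2 hρy.le) hgγ0]
  -- Lipschitz
  have hlip : ∀ ψ₁ ψ₂ : Fin m → ℝ, ‖ψ₁‖ ≤ γ → ‖ψ₂‖ ≤ γ →
      ‖T ψ₁ - T ψ₂‖ ≤ ((1 + ρ) * (1 - Real.cos γ)) * ‖ψ₁ - ψ₂‖ := by
    intro ψ₁ ψ₂ h₁ h₂
    have hTT : T ψ₁ - T ψ₂
        = Pcut.mulVec ((ψ₁ - fun e => Real.sin (ψ₁ e)) - (ψ₂ - fun e => Real.sin (ψ₂ e))) := by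
      simp only [hT]
      rw [add_sub_add_right_eq_sub, ← Matrix.mulVec_sub]
    have hcos1 : 0 ≤ 1 - Real.cos γ := by
      have := Real.cos_le_one γ
      linarith
    have hg : ‖(ψ₁ - fun e => Real.sin (ψ₁ e)) - (ψ₂ - fun e => Real.sin (ψ₂ e))‖
        ≤ (1 - Real.cos γ) * ‖ψ₁ - ψ₂‖ := by
      rw [pi_norm_le_iff_of_nonneg (mul_nonneg hcos1 (norm_nonneg _))]
      intro e
      have he₁ : |ψ₁ e| ≤ γ := le_trans (by simpa using norm_le_pi_norm ψ₁ e) h₁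
      have he₂ : |ψ₂ e| ≤ γ := le_trans (by simpa using norm_le_pi_norm ψ₂ e) h₂
      have := g_lip hγ0.le hγpi he₁ he₂
      have habs : |ψ₁ e - ψ₂ e| ≤ ‖ψ₁ - ψ₂‖ := by simpa using norm_le_pi_norm (ψ₁ - ψ₂) e
      calc ‖((ψ₁ - fun e => Real.sin (ψ₁ e)) - (ψ₂ - fun e => Real.sin (ψ₂ e))) e‖
          = |(ψ₁ e - Real.sin (ψ₁ e)) - (ψ₂ e - Real.sin (ψ₂ e))| := by
            simp [Real.norm_eq_abs]
        _ ≤ (1 - Real.cos γ) * |ψ₁ e - ψ₂ e| := this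
        _ ≤ (1 - Real.cos γ) * ‖ψ₁ - ψ₂‖ := mul_le_mul_of_nonneg_left habs hcos1
    rw [hTT]
    calc ‖Pcut.mulVec _‖ ≤ (1 + ρ) * ‖(ψ₁ - fun e => Real.sin (ψ₁ e)) - (ψ₂ - fun e => Real.sin (ψ₂ e))‖ := hPcutv _
      _ ≤ (1 + ρ) * ((1 - Real.cos γ) * ‖ψ₁ - ψ₂‖) := mul_le_mul_of_nonneg_left hg (by linarith)
      _ = ((1 + ρ) * (1 - Real.cos γ)) * ‖ψ₁ - ψ₂‖ := by ring
  -- contraction constant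
  set kr : ℝ := (1 + ρ) * (1 - Real.cos γ) with hkr
  have hkr0 : 0 ≤ kr := by
    have := Real.cos_le_one γ
    apply mul_nonneg <;> linarith
  have hkr1 : kr < 1 := by
    rw [hkr, hcos]
    have h1 : 1 - y / (y + 1) = 1 / (y + 1) := by field_simp; ring
    rw [h1]
    rw [mul_one_div, div_lt_one hy1]
    linarith
  -- set up the complete invariant set
  set knn : NNReal := kr.toNNReal with hknn
  set s : Set (Fin m → ℝ) := Metric.closedBall 0 γ with hs
  have hmem : ∀ ψ : Fin m → ℝ, ψ ∈ s ↔ ‖ψ‖ ≤ γ := by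
    intro ψ; rw [hs, Metric.mem_closedBall, dist_zero_right]
  have hsc : IsComplete s := Metric.isClosed_closedBall.isComplete
  have hsf : Set.MapsTo T s s := by
    intro ψ hψ
    exact (hmem _).2 (hinv ψ ((hmem ψ).1 hψ))
  have hcontr : ContractingWith knn (hsf.restrict T s s) := by
    constructor
    · rw [← NNReal.coe_lt_coe, NNReal.coe_one, hknn, Real.coe_toNNReal _ hkr0]
      exact hkr1
    · apply LipschitzWith.of_dist_le_mul
      intro p q
      have h1 : dist (hsf.restrict T s s p) (hsf.restrict T s s q) = dist (T p.1) (T q.1) := by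
        rw [Subtype.dist_eq]
        rfl
      rw [h1, Subtype.dist_eq, dist_eq_norm, dist_eq_norm]
      have h2 := hlip p.1 q.1 ((hmem _).1 p.2) ((hmem _).1 q.2)
      have h3 : (knn : ℝ) = kr := by rw [hknn, Real.coe_toNNReal _ hkr0]
      rw [h3]
      exact h2
  have h0s : (0 : Fin m → ℝ) ∈ s := by
    rw [hmem]
    simp [hγ0.le]
  obtain ⟨ψ, hψs, hfix, -, -⟩ :=
    hcontr.exists_fixedPoint' hsc hsf h0s (edist_ne_top _ _)
  -- uniqueness of fixed points in s
  have hfp_unique : ∀ φ ∈ s, T φ = φ → φ = ψ := by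
    intro φ hφ hfp
    have h1 : ‖φ - ψ‖ ≤ kr * ‖φ - ψ‖ := by
      have h2 := hlip φ ψ ((hmem _).1 hφ) ((hmem _).1 hψs)
      rwa [hfp, hfix.eq] at h2
    by_contra hne
    have h3 : 0 < ‖φ - ψ‖ := by
      rw [norm_pos_iff]
      exact sub_ne_zero.2 hne
    nlinarith
  -- construct xstar
  set g : Fin m → ℝ := ψ - fun e => Real.sin (ψ e) with hgdef
  set v : Fin n → ℝ := M.mulVec ((B * Matrix.diagonal a).mulVec g + ω) with hv
  have hψv : B.transpose.mulVec v = ψ := by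
    have h1 : Pcut.mulVec g
        = B.transpose.mulVec (M.mulVec ((B * Matrix.diagonal a).mulVec g)) := by
      rw [Matrix.mulVec_mulVec, Matrix.mulVec_mulVec]
    calc B.transpose.mulVec v
        = B.transpose.mulVec (M.mulVec ((B * Matrix.diagonal a).mulVec g))
          + B.transpose.mulVec (M.mulVec ω) := by
          rw [hv, Matrix.mulVec_add, Matrix.mulVec_add]
      _ = Pcut.mulVec g + B.transpose.mulVec (M.mulVec ω) := by rw [h1]
      _ = T ψ := rfl
      _ = ψ := hfix
  have hPB : Pcut * B.transpose
      = B.transpose * M * (B * Matrix.diagonal a * B.transpose) :=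
    Matrix.mul_assoc (B.transpose * M) (B * Matrix.diagonal a) B.transpose
  have hPcutBT : ∀ x : Fin n → ℝ,
      Pcut.mulVec (B.transpose.mulVec x) = B.transpose.mulVec x := by
    intro x
    rw [Matrix.mulVec_mulVec, hPB, Matrix.mul_assoc, ← Matrix.mulVec_mulVec,
      ← Matrix.mulVec_mulVec]
    exact F2 B a ha M hM1 x
  have hPcutψ : Pcut.mulVec ψ = ψ := by
    conv_lhs => rw [← hψv]
    rw [hPcutBT v, hψv]
  have hfix' : Pcut.mulVec ψ - Pcut.mulVec (fun e => Real.sin (ψ e))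
      + B.transpose.mulVec (M.mulVec ω) = ψ := by
    rw [← Matrix.mulVec_sub]
    exact hfix
  have h3 : Pcut.mulVec (fun e => Real.sin (ψ e)) = B.transpose.mulVec (M.mulVec ω) := by
    have h := hfix'
    rw [hPcutψ] at h
    have h' : B.transpose.mulVec (M.mulVec ω) - Pcut.mulVec (fun e => Real.sin (ψ e))
        = (ψ - Pcut.mulVec (fun e => Real.sin (ψ e)) + B.transpose.mulVec (M.mulVec ω)) - ψ := by
      abel
    rw [h, sub_self] at h'
    have := sub_eq_zero.1 h'
    exact this.symm
  have hkey : B.transpose.mulVec (M.mulVec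
        ((B * Matrix.diagonal a).mulVec (fun e => Real.sin (ψ e))))
      = B.transpose.mulVec (M.mulVec ω) := by
    rw [← h3, Matrix.mulVec_mulVec, Matrix.mulVec_mulVec]
  set u : Fin n → ℝ := (B * Matrix.diagonal a).mulVec (fun e => Real.sin (ψ e)) - ω with hu
  have hBMu : B.transpose.mulVec (M.mulVec u) = 0 := by
    rw [hu, Matrix.mulVec_sub, Matrix.mulVec_sub, hkey, sub_self]
  have hsumu : ∑ i, u i = 0 := by
    have h5 : (B * Matrix.diagonal a).mulVec (fun e => Real.sin (ψ e))
        = B.mulVec ((Matrix.diagonal a).mulVec (fun e => Real.sin (ψ e))) := by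
      rw [Matrix.mulVec_mulVec]
    simp only [hu, Pi.sub_apply]
    rw [Finset.sum_sub_distrib, h5, sum_B_mulVec B hB, hω, sub_zero]
  have hLMu : (B * Matrix.diagonal a * B.transpose).mulVec (M.mulVec u) = 0 := by
    have h6 : (B * Matrix.diagonal a * B.transpose).mulVec (M.mulVec u)
        = (B * Matrix.diagonal a).mulVec (B.transpose.mulVec (M.mulVec u)) := by
      conv_lhs => rw [Matrix.mulVec_mulVec]
      conv_rhs => rw [Matrix.mulVec_mulVec, Matrix.mulVec_mulVec]
    rw [h6, hBMu, Matrix.mulVec_zero]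
  have hu0' : u = 0 := by
    rw [← F1 B a hn hB hconn ha M hM1 u hsumu, hLMu]
  have hωeq : ω = (B * Matrix.diagonal a).mulVec (fun e => Real.sin (ψ e)) :=
    (sub_eq_zero.1 hu0').symm
  have hnn : (n:ℝ) ≠ 0 := by
    have : (0:ℝ) < n := by
      have : 0 < n := by omega
      exact_mod_cast this
    linarith
  set μ : ℝ := (∑ i, v i) / n with hμ
  set xstar : Fin n → ℝ := fun i => v i - μ with hxstar
  have hsum_x : ∑ i, xstar i = 0 := by
    simp only [hxstar]
    rw [Finset.sum_sub_distrib, Finset.sum_const, Finset.card_univ, Fintype.card_fin,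
      nsmul_eq_mul, hμ]
    field_simp
    ring
  have hBx : B.transpose.mulVec xstar = ψ := by
    have h7 : xstar = v - (fun _ => μ) := rfl
    rw [h7, Matrix.mulVec_sub, BT_mulVec_const B hB μ, sub_zero, hψv]
  have hnormx : ‖B.transpose.mulVec xstar‖ ≤ γ := by
    rw [hBx]
    exact (hmem ψ).1 hψs
  have hωx : ω = (B * Matrix.diagonal a).mulVec
      (fun e => Real.sin (B.transpose.mulVec xstar e)) := by
    rw [hBx]
    exact hωeq
  refine ⟨xstar, ⟨hsum_x, hnormx, hωx⟩, ?_⟩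
  intro x' hx'
  obtain ⟨hx'sum, hx'norm, hx'eq⟩ := hx'
  set ψ' : Fin m → ℝ := B.transpose.mulVec x' with hψ'
  have hψ's : ψ' ∈ s := (hmem ψ').2 hx'norm
  have hPψ' : Pcut.mulVec ψ' = ψ' := hPcutBT x'
  have hPsin' : Pcut.mulVec (fun e => Real.sin (ψ' e)) = B.transpose.mulVec (M.mulVec ω) := by
    have h8 : Pcut.mulVec (fun e => Real.sin (ψ' e))
        = B.transpose.mulVec (M.mulVec
            ((B * Matrix.diagonal a).mulVec (fun e => Real.sin (ψ' e)))) := by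
      rw [Matrix.mulVec_mulVec, Matrix.mulVec_mulVec]
    rw [h8, ← hx'eq]
  have hTψ' : T ψ' = ψ' := by
    show Pcut.mulVec (ψ' - fun e => Real.sin (ψ' e)) + B.transpose.mulVec (M.mulVec ω) = ψ'
    rw [Matrix.mulVec_sub, hPψ', hPsin']
    abel
  have hψ'ψ : ψ' = ψ := hfp_unique ψ' hψ's hTψ'
  have hdiff : B.transpose.mulVec (x' - xstar) = 0 := by
    rw [Matrix.mulVec_sub, hBx, ← hψ', hψ'ψ, sub_self]
  obtain ⟨cc, hcc⟩ := (hconn _).1 hdiff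
  have hsumd : ∑ i, (x' - xstar) i = 0 := by
    simp only [Pi.sub_apply]
    rw [Finset.sum_sub_distrib, hx'sum, hsum_x, sub_zero]
  rw [hcc] at hsumd
  simp only [Finset.sum_const, Finset.card_univ, Fintype.card_fin, nsmul_eq_mul] at hsumd
  have hcc0 : cc = 0 := by
    rcases mul_eq_zero.1 hsumd with h | h
    · exact absurd h hnn
    · exact h
  have hxx : x' - xstar = 0 := by
    rw [hcc, hcc0]
    rfl
  exact sub_eq_zero.1 hxx
end

section
/- Suppose in addition that the graph G is acyclic, i.e. m = n−1 and the columns of B are linearly independent (equivalently Im(Bᵀ) = ℝ^m, equivalently P_cyc = 0). Let ω ∈ ℝⁿ with 1_nᵀω = 0 and γ ∈ [0, π/2). Then there exists x ∈ ℝⁿ with 1_nᵀx = 0 and ‖Bᵀx‖∞ ≤ γ satisfying ω = B𝒜 sin(Bᵀx) if and only if ‖BᵀL†ω‖∞ ≤ sin(γ); moreover, in that case x* = L†B𝒜·arcsin(BᵀL†ω) is such a solution and Bᵀx* = arcsin(BᵀL†ω), so that sin(Bᵀx*) = BᵀL†ω. -/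
open Matrix Filter Topology

section Aux

variable {n m : ℕ}

lemma aux_quad (B : Matrix (Fin n) (Fin m) ℝ) (a : Fin m → ℝ) (v : Fin n → ℝ) :
    v ⬝ᵥ (B * Matrix.diagonal a * B.transpose).mulVec v
      = ∑ e, a e * (B.transpose.mulVec v e)^2 := by
  rw [← Matrix.mulVec_mulVec, ← Matrix.mulVec_mulVec, Matrix.dotProduct_mulVec,
    ← Matrix.mulVec_transpose]
  simp only [Matrix.mulVec_diagonal, dotProduct]
  exact Finset.sum_congr rfl fun e _ => by ring

/-- If `L v = 0` then `Bᵀ v = 0`. -/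
lemma aux_ker (B : Matrix (Fin n) (Fin m) ℝ) (a : Fin m → ℝ) (ha : ∀ e, 0 < a e)
    (v : Fin n → ℝ)
    (h : (B * Matrix.diagonal a * B.transpose).mulVec v = 0) :
    B.transpose.mulVec v = 0 := by
  have h0 : ∑ e, a e * (B.transpose.mulVec v e)^2 = 0 := by
    rw [← aux_quad B a v, h, dotProduct_zero]
  have hterm : ∀ e ∈ Finset.univ, a e * (B.transpose.mulVec v e)^2 = 0 := by
    rw [← Finset.sum_eq_zero_iff_of_nonneg]
    · exact h0
    · intro e _
      exact mul_nonneg (ha e).le (sq_nonneg _)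
  funext e
  have h1 := hterm e (Finset.mem_univ e)
  have h2 : (B.transpose.mulVec v e)^2 = 0 := by
    rcases mul_eq_zero.mp h1 with h | h
    · exact absurd h (ha e).ne'
    · exact h
  simpa using pow_eq_zero_iff (n := 2) (by norm_num) |>.mp h2

/-- Column sums of `B` vanish. -/
lemma aux_colsum (B : Matrix (Fin n) (Fin m) ℝ)
    (hB : ∀ e : Fin m, ∃ i j : Fin n, i ≠ j ∧ B i e = 1 ∧ B j e = -1 ∧
      ∀ k : Fin n, k ≠ i → k ≠ j → B k e = 0) (e : Fin m) :
    ∑ i, B i e = 0 := by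
  obtain ⟨i, j, hij, hi, hj, hz⟩ := hB e
  have h : ∑ k, B k e = B i e + B j e := by
    apply Finset.sum_eq_add_of_mem i j (Finset.mem_univ i) (Finset.mem_univ j) hij
    intro k _ hk
    exact hz k (by tauto) (by tauto)
  rw [h, hi, hj]; ring

/-- The entries of `B.mulVec w` sum to zero. -/
lemma aux_sum_mulVec (B : Matrix (Fin n) (Fin m) ℝ)
    (hB : ∀ e : Fin m, ∃ i j : Fin n, i ≠ j ∧ B i e = 1 ∧ B j e = -1 ∧
      ∀ k : Fin n, k ≠ i → k ≠ j → B k e = 0) (w : Fin m → ℝ) :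
    ∑ i, B.mulVec w i = 0 := by
  simp only [Matrix.mulVec, dotProduct]
  rw [Finset.sum_comm]
  apply Finset.sum_eq_zero
  intro e _
  rw [← Finset.sum_mul, aux_colsum B hB e, zero_mul]

/-- The entries of `L.mulVec z` sum to zero. -/
lemma aux_sum_LmulVec (B : Matrix (Fin n) (Fin m) ℝ)
    (hB : ∀ e : Fin m, ∃ i j : Fin n, i ≠ j ∧ B i e = 1 ∧ B j e = -1 ∧
      ∀ k : Fin n, k ≠ i → k ≠ j → B k e = 0) (a : Fin m → ℝ) (z : Fin n → ℝ) :
    ∑ i, (B * Matrix.diagonal a * B.transpose).mulVec z i = 0 := by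
  rw [Matrix.mul_assoc, ← Matrix.mulVec_mulVec]
  exact aux_sum_mulVec B hB _

end Aux

/-- Suppose the connected graph `G` is acyclic (equivalently
`Im(Bᵀ) = ℝ^m`). Let `ω ⊥ 1ₙ` and `γ ∈ [0, π/2)`. Then there exists `x ⊥ 1ₙ` with
`‖Bᵀx‖∞ ≤ γ` and `ω = B𝒜 sin(Bᵀx)` iff `‖BᵀL†ω‖∞ ≤ sin γ`; moreover, in that case
`x* = L†B𝒜·arcsin(BᵀL†ω)` is such a solution with `Bᵀx* = arcsin(BᵀL†ω)`, so that
`sin(Bᵀx*) = BᵀL†ω`. -/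
theorem acyclic_sync_characterization
    {n m : ℕ} (hn : 2 ≤ n)
    (B : Matrix (Fin n) (Fin m) ℝ)
    (hB : ∀ e : Fin m, ∃ i j : Fin n, i ≠ j ∧ B i e = 1 ∧ B j e = -1 ∧
      ∀ k : Fin n, k ≠ i → k ≠ j → B k e = 0)
    (hconn : ∀ x : Fin n → ℝ, B.transpose.mulVec x = 0 ↔ ∃ c : ℝ, x = fun _ => c)
    -- acyclicity: every edge vector is a flow vector, i.e. `Im(Bᵀ) = ℝ^m`
    (hacyclic : ∀ v : Fin m → ℝ, ∃ x : Fin n → ℝ, v = B.transpose.mulVec x)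
    (a : Fin m → ℝ) (ha : ∀ e, 0 < a e)
    (M : Matrix (Fin n) (Fin n) ℝ)
    (hM1 : (B * Matrix.diagonal a * B.transpose) * M * (B * Matrix.diagonal a * B.transpose)
        = B * Matrix.diagonal a * B.transpose)
    (hM2 : M * (B * Matrix.diagonal a * B.transpose) * M = M)
    (hM3 : (M * (B * Matrix.diagonal a * B.transpose))ᵀ = M * (B * Matrix.diagonal a * B.transpose))
    (hM4 : ((B * Matrix.diagonal a * B.transpose) * M)ᵀ = (B * Matrix.diagonal a * B.transpose) * M)
    (ω : Fin n → ℝ) (hω : ∑ i, ω i = 0)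
    (γ : ℝ) (hγ : γ ∈ Set.Ico 0 (Real.pi / 2)) :
    let η : Fin m → ℝ := B.transpose.mulVec (M.mulVec ω)
    ((∃ x : Fin n → ℝ, (∑ i, x i = 0) ∧ ‖B.transpose.mulVec x‖ ≤ γ ∧
        ω = (B * Matrix.diagonal a).mulVec (fun e => Real.sin (B.transpose.mulVec x e)))
      ↔ ‖η‖ ≤ Real.sin γ) ∧
    (‖η‖ ≤ Real.sin γ →
      ∀ xstar : Fin n → ℝ,
        xstar = M.mulVec ((B * Matrix.diagonal a).mulVec (fun e => Real.arcsin (η e))) →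
        (∑ i, xstar i = 0) ∧
        B.transpose.mulVec xstar = (fun e => Real.arcsin (η e)) ∧
        (fun e => Real.sin (B.transpose.mulVec xstar e)) = η ∧
        ‖B.transpose.mulVec xstar‖ ≤ γ ∧
        ω = (B * Matrix.diagonal a).mulVec (fun e => Real.sin (B.transpose.mulVec xstar e))) := by
  intro η
  set L : Matrix (Fin n) (Fin n) ℝ := B * Matrix.diagonal a * B.transpose with hL
  obtain ⟨hγ0, hγlt⟩ := hγ
  have hγle : γ ≤ Real.pi / 2 := hγlt.le
  have hsinγ0 : 0 ≤ Real.sin γ :=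
    Real.sin_nonneg_of_nonneg_of_le_pi hγ0 (by linarith [Real.pi_gt_three])
  have hsinγ1 : Real.sin γ ≤ 1 := Real.sin_le_one γ
  have hmono := Real.strictMonoOn_sin.monotoneOn
  have hBDBt : ∀ z : Fin n → ℝ,
      (B * Matrix.diagonal a).mulVec (B.transpose.mulVec z) = L.mulVec z := by
    intro z; rw [Matrix.mulVec_mulVec]
  have hLsymm : Lᵀ = L := by
    rw [hL, Matrix.transpose_mul, Matrix.transpose_mul, Matrix.transpose_transpose,
      Matrix.diagonal_transpose, Matrix.mul_assoc]
  -- `Bᵀ (M (L y)) = Bᵀ y` for all `y`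
  have key : ∀ y : Fin n → ℝ,
      B.transpose.mulVec (M.mulVec (L.mulVec y)) = B.transpose.mulVec y := by
    intro y
    have h0 : L.mulVec (M.mulVec (L.mulVec y) - y) = 0 := by
      rw [Matrix.mulVec_sub, Matrix.mulVec_mulVec, Matrix.mulVec_mulVec, hM1, sub_self]
    have h1 := aux_ker B a ha _ h0
    rw [Matrix.mulVec_sub, sub_eq_zero] at h1
    exact h1
  -- `L (M ω) = ω`
  have hLM : L.mulVec (M.mulVec ω) = ω := by
    have hLLM : L * L * M = L := by
      have h2 := congrArg Matrix.transpose hM1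
      rw [Matrix.transpose_mul, hM4, hLsymm] at h2
      rw [Matrix.mul_assoc]
      exact h2
    have h0 : L.mulVec (ω - L.mulVec (M.mulVec ω)) = 0 := by
      rw [Matrix.mulVec_sub, Matrix.mulVec_mulVec, Matrix.mulVec_mulVec, hLLM, sub_self]
    have hBt := aux_ker B a ha _ h0
    obtain ⟨c, hc⟩ := (hconn _).mp hBt
    have hsum : ∑ i, (ω - L.mulVec (M.mulVec ω)) i = 0 := by
      have h3 : ∑ i, L.mulVec (M.mulVec ω) i = 0 := aux_sum_LmulVec B hB a _
      simp only [Pi.sub_apply, Finset.sum_sub_distrib, h3, hω, sub_zero]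
    rw [hc] at hsum
    simp only [Finset.sum_const, Finset.card_univ, Fintype.card_fin, nsmul_eq_mul] at hsum
    have hc0 : c = 0 := by
      rcases mul_eq_zero.mp hsum with h | h
      · exact absurd h (by exact_mod_cast (by omega : n ≠ 0))
      · exact h
    have h4 : ω - L.mulVec (M.mulVec ω) = 0 := by rw [hc, hc0]; rfl
    exact (sub_eq_zero.mp h4).symm
  -- if `ω = B𝒜 sin(Bᵀ x)` then `η = sin(Bᵀ x)`
  have hforward : ∀ x : Fin n → ℝ,
      ω = (B * Matrix.diagonal a).mulVec (fun e => Real.sin (B.transpose.mulVec x e)) →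
      η = fun e => Real.sin (B.transpose.mulVec x e) := by
    intro x hx
    obtain ⟨y, hy⟩ := hacyclic (fun e => Real.sin (B.transpose.mulVec x e))
    have hωL : ω = L.mulVec y := by
      rw [hx, hy, hBDBt y]
    show B.transpose.mulVec (M.mulVec ω) = _
    rw [hωL, key y, ← hy]
  -- the main solution construction
  have hsol : ‖η‖ ≤ Real.sin γ →
      ∀ xstar : Fin n → ℝ,
        xstar = M.mulVec ((B * Matrix.diagonal a).mulVec (fun e => Real.arcsin (η e))) →
        (∑ i, xstar i = 0) ∧
        B.transpose.mulVec xstar = (fun e => Real.arcsin (η e)) ∧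
        (fun e => Real.sin (B.transpose.mulVec xstar e)) = η ∧
        ‖B.transpose.mulVec xstar‖ ≤ γ ∧
        ω = (B * Matrix.diagonal a).mulVec (fun e => Real.sin (B.transpose.mulVec xstar e)) := by
    intro hη xstar hxs
    have hηe : ∀ e, |η e| ≤ Real.sin γ := by
      intro e
      have h := (pi_norm_le_iff_of_nonneg hsinγ0).mp hη e
      rwa [Real.norm_eq_abs] at h
    have hη1 : ∀ e, -1 ≤ η e ∧ η e ≤ 1 := fun e =>
      abs_le.mp (le_trans (hηe e) hsinγ1)
    obtain ⟨y, hy⟩ := hacyclic (fun e => Real.arcsin (η e))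
    have hxsL : xstar = M.mulVec (L.mulVec y) := by
      rw [hxs, hy, hBDBt y]
    have hBt : B.transpose.mulVec xstar = fun e => Real.arcsin (η e) := by
      rw [hxsL, key y, ← hy]
    have hsin : (fun e => Real.sin (B.transpose.mulVec xstar e)) = η := by
      funext e
      have he : B.transpose.mulVec xstar e = Real.arcsin (η e) := congrFun hBt e
      rw [he]
      exact Real.sin_arcsin (hη1 e).1 (hη1 e).2
    refine ⟨?_, hBt, hsin, ?_, ?_⟩
    · -- sum is zero
      have hML : M * L = L * Mᵀ := by
        rw [← hM3, Matrix.transpose_mul, hLsymm]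
      have : xstar = L.mulVec (Mᵀ.mulVec y) := by
        rw [hxsL, Matrix.mulVec_mulVec, hML, ← Matrix.mulVec_mulVec]
      rw [this]
      exact aux_sum_LmulVec B hB a _
    · -- norm bound
      rw [pi_norm_le_iff_of_nonneg hγ0]
      intro e
      have he : B.transpose.mulVec xstar e = Real.arcsin (η e) := congrFun hBt e
      rw [Real.norm_eq_abs, he, abs_le]
      constructor
      · have h1 : -γ = Real.arcsin (-(Real.sin γ)) := by
          rw [Real.arcsin_neg, Real.arcsin_sin (by linarith) hγle]
        rw [h1]
        exact Real.monotone_arcsin (neg_le_of_abs_le (hηe e))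
      · have h2 : γ = Real.arcsin (Real.sin γ) :=
          (Real.arcsin_sin (by linarith) hγle).symm
        rw [h2]
        exact Real.monotone_arcsin (le_of_abs_le (hηe e))
    · -- the equation
      rw [hsin]
      show ω = (B * Matrix.diagonal a).mulVec (B.transpose.mulVec (M.mulVec ω))
      rw [hBDBt (M.mulVec ω)]
      exact hLM.symm
  refine ⟨⟨?_, ?_⟩, hsol⟩
  · rintro ⟨x, hx1, hx2, hx3⟩
    have hηx := hforward x hx3
    rw [pi_norm_le_iff_of_nonneg hsinγ0]
    intro e
    have hte : |B.transpose.mulVec x e| ≤ γ := by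
      have h := (pi_norm_le_iff_of_nonneg hγ0).mp hx2 e
      rwa [Real.norm_eq_abs] at h
    set t := B.transpose.mulVec x e with htdef
    have ht1 : -(Real.pi/2) ≤ t := by
      have := neg_le_of_abs_le hte; linarith
    have ht2 : t ≤ Real.pi/2 := by
      have := le_of_abs_le hte; linarith
    have hmem : t ∈ Set.Icc (-(Real.pi/2)) (Real.pi/2) := ⟨ht1, ht2⟩
    have hγmem : γ ∈ Set.Icc (-(Real.pi/2)) (Real.pi/2) := ⟨by linarith, hγle⟩
    have hγmem' : -γ ∈ Set.Icc (-(Real.pi/2)) (Real.pi/2) := ⟨by linarith, by linarith⟩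
    have heq : η e = Real.sin t := congrFun hηx e
    rw [Real.norm_eq_abs, heq, abs_le]
    constructor
    · have := hmono hγmem' hmem (neg_le_of_abs_le hte)
      rwa [Real.sin_neg] at this
    · exact hmono hmem hγmem (le_of_abs_le hte)
  · intro hη
    obtain ⟨h1, h2, h3, h4, h5⟩ :=
      hsol hη (M.mulVec ((B * Matrix.diagonal a).mulVec (fun e => Real.arcsin (η e)))) rfl
    exact ⟨_, h1, h4, h5⟩
end
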